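/- Let (D_cf, C_cf) be any cut-free cycle-normal CLKID^ω_a proof of the sequent Add2(x,y,z) ⊢ Add1(x,y,z). For every infinite index path (Γ_i ⊢ Δ_i)_{i ≥ 0} in the tree-unfolding of (D_cf, C_cf), there exists l ∈ ℕ such that Γ_l ⊢ Δ_l is a switching point and Γ_{l+1} ⊢ Δ_{l+1} is the right assumption of the (Case Add2) rule with conclusion Γ_l ⊢ Δ_l. -/

import Mathlib

namespace CLKID

/-- Terms of the language: variables, the constant `0`, and the unary function `s`. -/
inductive Tm : Type where
  | var : ℕ → Tm
  | zero : Tm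
  | s : Tm → Tm
deriving DecidableEq

/-- `sIter n t` is the term `s^n t`. -/
def sIter : ℕ → Tm → Tm
  | 0, t => t
  | n + 1, t => Tm.s (sIter n t)

/-- Substitution on terms. -/
def Tm.subst (θ : ℕ → Tm) : Tm → Tm
  | .var x => θ x
  | .zero => .zero
  | .s t => .s (t.subst θ)

/-- Free variables of a term. -/
def Tm.fv : Tm → Set ℕ
  | .var x => {x}
  | .zero => ∅
  | .s t => t.fv

/-- Subterms of a term. -/
def Tm.sub : Tm → Set Tm
  | .var x => {Tm.var x}
  | .zero => {Tm.zero}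
  | .s t => insert (Tm.s t) t.sub

/-- The variable of a term (`none` if the term is of the form `s^n 0`). -/
def Tm.varOf : Tm → Option ℕ
  | .var x => some x
  | .zero => none
  | .s t => t.varOf

/-- Formulas: equations, the two inductive-predicate atoms `Add1`/`Add2`,
    and the usual first-order connectives and quantifiers. -/
inductive Fm : Type where
  | eq : Tm → Tm → Fm
  | add1 : Tm → Tm → Tm → Fm
  | add2 : Tm → Tm → Tm → Fm
  | not : Fm → Fm
  | and : Fm → Fm → Fm
  | or : Fm → Fm → Fm
  | imp : Fm → Fm → Fm
  | all : ℕ → Fm → Fm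
  | ex : ℕ → Fm → Fm
deriving DecidableEq

/-- Substitution on formulas. -/
def Fm.subst (θ : ℕ → Tm) : Fm → Fm
  | .eq t u => .eq (t.subst θ) (u.subst θ)
  | .add1 a b c => .add1 (a.subst θ) (b.subst θ) (c.subst θ)
  | .add2 a b c => .add2 (a.subst θ) (b.subst θ) (c.subst θ)
  | .not φ => .not (φ.subst θ)
  | .and φ ψ => .and (φ.subst θ) (ψ.subst θ)
  | .or φ ψ => .or (φ.subst θ) (ψ.subst θ)
  | .imp φ ψ => .imp (φ.subst θ) (ψ.subst θ)
  | .all x φ => .all x (φ.subst (Function.update θ x (Tm.var x)))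
  | .ex x φ => .ex x (φ.subst (Function.update θ x (Tm.var x)))

/-- Free variables of a formula. -/
def Fm.fv : Fm → Set ℕ
  | .eq t u => t.fv ∪ u.fv
  | .add1 a b c => a.fv ∪ b.fv ∪ c.fv
  | .add2 a b c => a.fv ∪ b.fv ∪ c.fv
  | .not φ => φ.fv
  | .and φ ψ => φ.fv ∪ ψ.fv
  | .or φ ψ => φ.fv ∪ ψ.fv
  | .imp φ ψ => φ.fv ∪ ψ.fv
  | .all x φ => φ.fv \ {x}
  | .ex x φ => φ.fv \ {x}

/-- Terms occurring in a formula. -/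
def Fm.tms : Fm → Set Tm
  | .eq t u => t.sub ∪ u.sub
  | .add1 a b c => a.sub ∪ b.sub ∪ c.sub
  | .add2 a b c => a.sub ∪ b.sub ∪ c.sub
  | .not φ => φ.tms
  | .and φ ψ => φ.tms ∪ ψ.tms
  | .or φ ψ => φ.tms ∪ ψ.tms
  | .imp φ ψ => φ.tms ∪ ψ.tms
  | .all _ φ => φ.tms
  | .ex _ φ => φ.tms

/-- The substitution `[x := t]`. -/
def sub1 (x : ℕ) (t : Tm) : ℕ → Tm := fun y => if y = x then t else Tm.var y

/-- The simultaneous substitution `[v1 := t, v2 := u]`. -/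
def sub2 (v1 v2 : ℕ) (t u : Tm) : ℕ → Tm :=
  fun z => if z = v1 then t else if z = v2 then u else Tm.var z

/-- `≡_Γ`: the smallest congruence relation on terms containing all pairs `(t, u)`
    with the equation `t = u` in `Γ`. -/
inductive EqvTm (Γ : Set Fm) : Tm → Tm → Prop where
  | base {t u : Tm} : Fm.eq t u ∈ Γ → EqvTm Γ t u
  | refl (t : Tm) : EqvTm Γ t t
  | symm {t u : Tm} : EqvTm Γ t u → EqvTm Γ u t
  | trans {t u v : Tm} : EqvTm Γ t u → EqvTm Γ u v → EqvTm Γ t v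
  | sCongr {t u : Tm} : EqvTm Γ t u → EqvTm Γ (Tm.s t) (Tm.s u)

/-- `t ~_Γ u` : `s^n t ≡_Γ s^m u` for some naturals `n`, `m`. -/
def DepTm (Γ : Set Fm) (t u : Tm) : Prop := ∃ n m : ℕ, EqvTm Γ (sIter n t) (sIter m u)

/-- A sequent: a pair of finite sets of formulas. -/
structure Seq where
  ant : Finset Fm
  suc : Finset Fm

/-- The antecedent of a sequent, as a set of formulas. -/
def antSet (S : Seq) : Set Fm := ↑S.ant

/-- `[Γ]` from Lemma on chains: `{ s^n t1 = s^n t2 | t1 = t2 ∈ Γ or t2 = t1 ∈ Γ }`. -/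
def brkt (Γ : Set Fm) : Set Fm :=
  {φ | ∃ (n : ℕ) (t1 t2 : Tm), φ = Fm.eq (sIter n t1) (sIter n t2) ∧
        (Fm.eq t1 t2 ∈ Γ ∨ Fm.eq t2 t1 ∈ Γ)}

/-- `B1(Γ ⊢ Δ)` : second arguments of `Add1` atoms in the consequent. -/
def B1 (S : Seq) : Set Tm := {b | ∃ a c, Fm.add1 a b c ∈ S.suc}

/-- `C(Γ ⊢ Δ)` : third arguments of `Add2` atoms in the antecedent
    or `Add1` atoms in the consequent. -/
def Cset (S : Seq) : Set Tm :=
  {c | (∃ a b, Fm.add2 a b c ∈ S.ant) ∨ (∃ a b, Fm.add1 a b c ∈ S.suc)}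

/-- Index sequent. -/
def IndexSequent (S : Seq) : Prop :=
  (∀ t ∈ B1 S, ∀ u ∈ Cset S, ¬ DepTm (antSet S) t u) ∧
  (∀ b ∈ B1 S, ∀ b' ∈ B1 S, ∀ n m : ℕ, EqvTm (antSet S) (sIter n b) (sIter m b') → n = m)

/-! ## The cyclic proof systems `CLKID^ω` and `CLKID^ω_a` -/

/-- Rule labels; each label carries the instance data needed to describe the
    rule application (principal formulas, substitutions, case variables, ...).
    `bud` labels bud leaves of cyclic derivation trees. -/
inductive Rule : Type where
  | ax
  | weak
  | cut (φ : Fm)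
  | subst (θ : ℕ → Tm)
  | negL (φ : Fm)
  | negR (φ : Fm)
  | andL (φ ψ : Fm)
  | andR (φ ψ : Fm)
  | orL (φ ψ : Fm)
  | orR (φ ψ : Fm)
  | impL (φ ψ : Fm)
  | impR (φ ψ : Fm)
  | allL (x : ℕ) (t : Tm) (φ : Fm)
  | allR (x : ℕ) (φ : Fm)
  | exL (x : ℕ) (φ : Fm)
  | exR (x : ℕ) (t : Tm) (φ : Fm)
  | eqR (t : Tm)
  | eqL (v1 v2 : ℕ) (t u : Tm)
  | eqLa (v1 v2 : ℕ) (t u : Tm)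
  | add1R1
  | add1R2 (a b c : Tm)
  | add2R1
  | add2R2 (a b c : Tm)
  | caseAdd1 (a b c : Tm) (x y z : ℕ)
  | caseAdd2 (a b c : Tm) (x y z : ℕ)
  | bud

/-- `Inf r S L` : the sequent `S` follows from the list of premises `L`
    by the rule (instance) `r`. -/
inductive Inf : Rule → Seq → List Seq → Prop where
  | ax {Γ Δ : Finset Fm} :
      (Γ ∩ Δ).Nonempty → Inf .ax ⟨Γ, Δ⟩ []
  | weak {Γ Δ Γ' Δ' : Finset Fm} :
      Γ' ⊆ Γ → Δ' ⊆ Δ → Inf .weak ⟨Γ, Δ⟩ [⟨Γ', Δ'⟩]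
  | cut {Γ Δ : Finset Fm} {φ : Fm} :
      Inf (.cut φ) ⟨Γ, Δ⟩ [⟨Γ, insert φ Δ⟩, ⟨insert φ Γ, Δ⟩]
  | subst {Γ Δ : Finset Fm} {θ : ℕ → Tm} :
      Inf (.subst θ) ⟨Γ.image (Fm.subst θ), Δ.image (Fm.subst θ)⟩ [⟨Γ, Δ⟩]
  | negL {Γ Δ : Finset Fm} {φ : Fm} :
      Inf (.negL φ) ⟨insert (.not φ) Γ, Δ⟩ [⟨Γ, insert φ Δ⟩]
  | negR {Γ Δ : Finset Fm} {φ : Fm} :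
      Inf (.negR φ) ⟨Γ, insert (.not φ) Δ⟩ [⟨insert φ Γ, Δ⟩]
  | andL {Γ Δ : Finset Fm} {φ ψ : Fm} :
      Inf (.andL φ ψ) ⟨insert (.and φ ψ) Γ, Δ⟩ [⟨insert φ (insert ψ Γ), Δ⟩]
  | andR {Γ Δ : Finset Fm} {φ ψ : Fm} :
      Inf (.andR φ ψ) ⟨Γ, insert (.and φ ψ) Δ⟩ [⟨Γ, insert φ Δ⟩, ⟨Γ, insert ψ Δ⟩]
  | orL {Γ Δ : Finset Fm} {φ ψ : Fm} :
      Inf (.orL φ ψ) ⟨insert (.or φ ψ) Γ, Δ⟩ [⟨insert φ Γ, Δ⟩, ⟨insert ψ Γ, Δ⟩]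
  | orR {Γ Δ : Finset Fm} {φ ψ : Fm} :
      Inf (.orR φ ψ) ⟨Γ, insert (.or φ ψ) Δ⟩ [⟨Γ, insert φ (insert ψ Δ)⟩]
  | impL {Γ Δ : Finset Fm} {φ ψ : Fm} :
      Inf (.impL φ ψ) ⟨insert (.imp φ ψ) Γ, Δ⟩ [⟨Γ, insert φ Δ⟩, ⟨insert ψ Γ, Δ⟩]
  | impR {Γ Δ : Finset Fm} {φ ψ : Fm} :
      Inf (.impR φ ψ) ⟨Γ, insert (.imp φ ψ) Δ⟩ [⟨insert φ Γ, insert ψ Δ⟩]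
  | allL {Γ Δ : Finset Fm} {x : ℕ} {t : Tm} {φ : Fm} :
      Inf (.allL x t φ) ⟨insert (.all x φ) Γ, Δ⟩ [⟨insert (φ.subst (sub1 x t)) Γ, Δ⟩]
  | allR {Γ Δ : Finset Fm} {x : ℕ} {φ : Fm} :
      (∀ ψ ∈ Γ ∪ Δ, x ∉ Fm.fv ψ) →
      Inf (.allR x φ) ⟨Γ, insert (.all x φ) Δ⟩ [⟨Γ, insert φ Δ⟩]
  | exL {Γ Δ : Finset Fm} {x : ℕ} {φ : Fm} :
      (∀ ψ ∈ Γ ∪ Δ, x ∉ Fm.fv ψ) →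
      Inf (.exL x φ) ⟨insert (.ex x φ) Γ, Δ⟩ [⟨insert φ Γ, Δ⟩]
  | exR {Γ Δ : Finset Fm} {x : ℕ} {t : Tm} {φ : Fm} :
      Inf (.exR x t φ) ⟨Γ, insert (.ex x φ) Δ⟩ [⟨Γ, insert (φ.subst (sub1 x t)) Δ⟩]
  | eqR {Γ Δ : Finset Fm} {t : Tm} :
      Inf (.eqR t) ⟨Γ, insert (.eq t t) Δ⟩ []
  | eqL {Γ Δ : Finset Fm} {v1 v2 : ℕ} {t u : Tm} :
      Inf (.eqL v1 v2 t u)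
        ⟨insert (.eq t u) (Γ.image (Fm.subst (sub2 v1 v2 t u))),
          Δ.image (Fm.subst (sub2 v1 v2 t u))⟩
        [⟨Γ.image (Fm.subst (sub2 v1 v2 u t)), Δ.image (Fm.subst (sub2 v1 v2 u t))⟩]
  | eqLa {Γ Δ : Finset Fm} {v1 v2 : ℕ} {t u : Tm} :
      Inf (.eqLa v1 v2 t u)
        ⟨insert (.eq t u) (Γ.image (Fm.subst (sub2 v1 v2 t u))),
          Δ.image (Fm.subst (sub2 v1 v2 t u))⟩
        [⟨insert (.eq t u) (Γ.image (Fm.subst (sub2 v1 v2 u t))),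
          Δ.image (Fm.subst (sub2 v1 v2 u t))⟩]
  | add1R1 {Γ Δ : Finset Fm} {b : Tm} :
      Inf .add1R1 ⟨Γ, insert (.add1 .zero b b) Δ⟩ []
  | add1R2 {Γ Δ : Finset Fm} {a b c : Tm} :
      Inf (.add1R2 a b c) ⟨Γ, insert (.add1 (.s a) b (.s c)) Δ⟩ [⟨Γ, insert (.add1 a b c) Δ⟩]
  | add2R1 {Γ Δ : Finset Fm} {b : Tm} :
      Inf .add2R1 ⟨Γ, insert (.add2 .zero b b) Δ⟩ []
  | add2R2 {Γ Δ : Finset Fm} {a b c : Tm} :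
      Inf (.add2R2 a b c) ⟨Γ, insert (.add2 (.s a) b c) Δ⟩ [⟨Γ, insert (.add2 a (.s b) c) Δ⟩]
  | caseAdd1 {Γ Δ : Finset Fm} {a b c : Tm} {x y z : ℕ} :
      x ≠ y → x ≠ z → y ≠ z →
      (∀ ψ ∈ insert (Fm.add1 a b c) (Γ ∪ Δ), x ∉ Fm.fv ψ ∧ y ∉ Fm.fv ψ ∧ z ∉ Fm.fv ψ) →
      Inf (.caseAdd1 a b c x y z) ⟨insert (.add1 a b c) Γ, Δ⟩
        [⟨insert (.eq a .zero) (insert (.eq b (.var y)) (insert (.eq c (.var y)) Γ)), Δ⟩,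
         ⟨insert (.eq a (.s (.var x))) (insert (.eq b (.var y)) (insert (.eq c (.s (.var z)))
            (insert (.add1 (.var x) (.var y) (.var z)) Γ))), Δ⟩]
  | caseAdd2 {Γ Δ : Finset Fm} {a b c : Tm} {x y z : ℕ} :
      x ≠ y → x ≠ z → y ≠ z →
      (∀ ψ ∈ insert (Fm.add2 a b c) (Γ ∪ Δ), x ∉ Fm.fv ψ ∧ y ∉ Fm.fv ψ ∧ z ∉ Fm.fv ψ) →
      Inf (.caseAdd2 a b c x y z) ⟨insert (.add2 a b c) Γ, Δ⟩
        [⟨insert (.eq a .zero) (insert (.eq b (.var y)) (insert (.eq c (.var y)) Γ)), Δ⟩,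
         ⟨insert (.eq a (.s (.var x))) (insert (.eq b (.var y)) (insert (.eq c (.var z))
            (insert (.add2 (.var x) (.s (.var y)) (.var z)) Γ))), Δ⟩]

/-- A labeling of tree nodes (finite sequences of naturals) by sequents and rules;
    `none` means the node is not in the tree. -/
abbrev Lbl : Type := List ℕ → Option (Seq × Rule)

/-- The children of `σ` are labeled exactly by the premise list `prems`. -/
def childrenOK (f : Lbl) (σ : List ℕ) (prems : List Seq) : Prop :=
  (∀ i : Fin prems.length, ∃ r', f (σ ++ [(i : ℕ)]) = some (prems.get i, r')) ∧
  (∀ i : ℕ, prems.length ≤ i → f (σ ++ [i]) = none)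

/-- Derivation trees (possibly infinite): prefix-closed domain, each non-bud node
    is the conclusion of a rule whose premises label its children, buds are leaves. -/
structure DTree where
  label : Lbl
  root_def : label [] ≠ none
  prefix_closed : ∀ σ τ : List ℕ, label (σ ++ τ) ≠ none → label σ ≠ none
  wf : ∀ σ S r, label σ = some (S, r) →
    (r = Rule.bud ∧ ∀ i : ℕ, label (σ ++ [i]) = none) ∨
    (r ≠ Rule.bud ∧ ∃ prems, Inf r S prems ∧ childrenOK label σ prems)

/-- `σ` is a bud of the labeling `f`. -/
def budAt (f : Lbl) (σ : List ℕ) : Prop := ∃ S, f σ = some (S, Rule.bud)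

/-- `σ` is an inner node of `f` labeled with the sequent `S`. -/
def innerWith (f : Lbl) (σ : List ℕ) (S : Seq) : Prop :=
  ∃ r, f σ = some (S, r) ∧ r ≠ Rule.bud

/-- A pre-proof: a finite derivation tree together with a function assigning to
    each bud a companion, i.e. an inner node labeled with the same sequent. -/
structure PreProof where
  D : DTree
  fin : {σ : List ℕ | D.label σ ≠ none}.Finite
  C : List ℕ → List ℕ
  comp : ∀ σ S, D.label σ = some (S, Rule.bud) → innerWith D.label (C σ) S

/-- Cycle-normality: every companion is an ancestor of its bud. -/
def PreProof.CycleNormal (P : PreProof) : Prop :=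
  ∀ σ S, P.D.label σ = some (S, Rule.bud) → P.C σ <+: σ

/-- `T` is the tree-unfolding of the pre-proof `P`: it agrees with `P.D` on
    non-bud nodes, below a bud it continues as below the bud's companion, and it
    is empty on nodes not in `P.D` having no bud prefix. -/
def IsUnfolding (P : PreProof) (T : Lbl) : Prop :=
  (∀ σ, P.D.label σ ≠ none → ¬ budAt P.D.label σ → T σ = P.D.label σ) ∧
  (∀ σ₁ σ₂ : List ℕ, budAt P.D.label σ₁ → T (σ₁ ++ σ₂) = T (P.C σ₁ ++ σ₂)) ∧
  (∀ σ, P.D.label σ = none → (∀ σ₁, σ₁ <+: σ → ¬ budAt P.D.label σ₁) → T σ = none)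

/-- An infinite path in the labeling `f`. -/
def IsInfPath (f : Lbl) (p : ℕ → List ℕ) : Prop :=
  (∀ i, f (p i) ≠ none) ∧ (∀ i, ∃ n : ℕ, p (i + 1) = p i ++ [n])

/-- Atomic formulas with an inductive predicate. -/
def isIndAtom (φ : Fm) : Prop :=
  (∃ a b c, φ = Fm.add1 a b c) ∨ (∃ a b c, φ = Fm.add2 a b c)

/-- A progressing trace step: the traced formula is the principal formula of a
    case rule and its successor (in the corresponding case distinction, child `j`)
    is a case-descendant. -/
def progStep : Rule → ℕ → Fm → Fm → Prop := fun r j τ τ' =>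
  match r with
  | .caseAdd1 a b c x y z =>
      τ = Fm.add1 a b c ∧ j = 1 ∧ τ' = Fm.add1 (.var x) (.var y) (.var z)
  | .caseAdd2 a b c x y z =>
      τ = Fm.add2 a b c ∧ j = 1 ∧ τ' = Fm.add2 (.var x) (.s (.var y)) (.var z)
  | _ => False

/-- The trace connection relation between the traced formula at a conclusion of a
    rule `r` and the traced formula at its `j`-th premise. -/
def connStep : Rule → ℕ → Fm → Fm → Prop := fun r j τ τ' =>
  match r with
  | .subst θ => τ = Fm.subst θ τ'
  | .eqL v1 v2 t u =>
      ∃ F : Fm, τ = Fm.subst (sub2 v1 v2 t u) F ∧ τ' = Fm.subst (sub2 v1 v2 u t) F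
  | .eqLa v1 v2 t u =>
      ∃ F : Fm, τ = Fm.subst (sub2 v1 v2 t u) F ∧ τ' = Fm.subst (sub2 v1 v2 u t) F
  | .caseAdd1 a b c x y z => τ' = τ ∨ progStep (.caseAdd1 a b c x y z) j τ τ'
  | .caseAdd2 a b c x y z => τ' = τ ∨ progStep (.caseAdd2 a b c x y z) j τ τ'
  | _ => τ' = τ

/-- `τ` is a trace following the tail from `k` of the path `p` in `f`. -/
def IsTraceFrom (f : Lbl) (p : ℕ → List ℕ) (k : ℕ) (τ : ℕ → Fm) : Prop :=
  ∀ i, k ≤ i →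
    ∃ (S : Seq) (r : Rule) (j : ℕ), f (p i) = some (S, r) ∧ τ i ∈ S.ant ∧ isIndAtom (τ i) ∧
      p (i + 1) = p i ++ [j] ∧ connStep r j (τ i) (τ (i + 1))

/-- The trace `τ` progresses at position `i` of the path `p`. -/
def progAt (f : Lbl) (p : ℕ → List ℕ) (τ : ℕ → Fm) (i : ℕ) : Prop :=
  ∃ (S : Seq) (r : Rule) (j : ℕ), f (p i) = some (S, r) ∧ p (i + 1) = p i ++ [j] ∧
    progStep r j (τ i) (τ (i + 1))

/-- The global trace condition for a (possibly infinite) labeling `f`. -/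
def GTC (f : Lbl) : Prop :=
  ∀ p : ℕ → List ℕ, IsInfPath f p →
    ∃ (k : ℕ) (τ : ℕ → Fm), IsTraceFrom f p k τ ∧
      ∀ n : ℕ, ∃ i, n ≤ i ∧ k ≤ i ∧ progAt f p τ i

/-- A pre-proof is a proof when its tree-unfolding satisfies the
    global trace condition. -/
def PreProof.IsProof (P : PreProof) : Prop := ∃ T : Lbl, IsUnfolding P T ∧ GTC T

/-- Some rule satisfying `Q` occurs in the labeling `f`. -/
def usesRule (f : Lbl) (Q : Rule → Prop) : Prop := ∃ σ S r, f σ = some (S, r) ∧ Q r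

/-- No occurrence of (Cut). -/
def PreProof.CutFree (P : PreProof) : Prop :=
  ¬ usesRule P.D.label (fun r => ∃ φ, r = Rule.cut φ)

/-- No occurrence of (= L_a): the pre-proof is a `CLKID^ω` pre-proof. -/
def PreProof.NoEqLa (P : PreProof) : Prop :=
  ¬ usesRule P.D.label (fun r => ∃ v1 v2 t u, r = Rule.eqLa v1 v2 t u)

/-- No occurrence of (= L): the pre-proof is a `CLKID^ω_a` pre-proof. -/
def PreProof.NoEqL (P : PreProof) : Prop :=
  ¬ usesRule P.D.label (fun r => ∃ v1 v2 t u, r = Rule.eqL v1 v2 t u)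

/-- The conclusion of the pre-proof is the sequent `S`. -/
def PreProof.Concl (P : PreProof) (S : Seq) : Prop := ∃ r, P.D.label [] = some (S, r)

/-- Provability in `CLKID^ω`. -/
def ProvableW (S : Seq) : Prop :=
  ∃ P : PreProof, P.IsProof ∧ P.NoEqLa ∧ P.Concl S

/-- Provability in `CLKID^ω_a`. -/
def ProvableWa (S : Seq) : Prop :=
  ∃ P : PreProof, P.IsProof ∧ P.NoEqL ∧ P.Concl S

/-- Cut-free provability in `CLKID^ω`. -/
def CutFreeProvableW (S : Seq) : Prop :=
  ∃ P : PreProof, P.IsProof ∧ P.CutFree ∧ P.NoEqLa ∧ P.Concl S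

/-- The sequent `Add2(x, y, z) ⊢ Add1(x, y, z)`. -/
def goalSeq : Seq :=
  ⟨{Fm.add2 (Tm.var 0) (Tm.var 1) (Tm.var 2)}, {Fm.add1 (Tm.var 0) (Tm.var 1) (Tm.var 2)}⟩

/-- A cut-free cycle-normal `CLKID^ω_a` proof of `Add2(x,y,z) ⊢ Add1(x,y,z)`. -/
def IsCNProofOfGoal (P : PreProof) : Prop :=
  P.IsProof ∧ P.CutFree ∧ P.NoEqL ∧ P.CycleNormal ∧ P.Concl goalSeq

/-- The index of an `Add2` atom with second argument `b` in the sequent `S` is `⊥`. -/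
def IndexBot (S : Seq) (b : Tm) : Prop :=
  ∀ a' b' c', Fm.add1 a' b' c' ∈ S.suc → ¬ DepTm (antSet S) b b'

/-- `σ` is a switching point of `f`: the conclusion of a `(Case Add2)` rule whose
    principal formula has index `⊥`. -/
def SwitchingPoint (f : Lbl) (σ : List ℕ) : Prop :=
  ∃ S a b c x y z, f σ = some (S, Rule.caseAdd2 a b c x y z) ∧ IndexBot S b

/-- `σ` is the conclusion of a `(Case Add2)` rule in `f`. -/
def CaseAdd2At (f : Lbl) (σ : List ℕ) : Prop :=
  ∃ S a b c x y z, f σ = some (S, Rule.caseAdd2 a b c x y z)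

/-- The node `σ` of `f` is labeled with an index sequent. -/
def IndexSequentAt (f : Lbl) (σ : List ℕ) : Prop :=
  ∃ S r, f σ = some (S, r) ∧ IndexSequent S

/-- A finite index path `p 0, …, p N` in `f`:  its first sequent is an index
    sequent, and a step to the left premise (child `0`) of a `(Case Add2)` rule
    only happens at switching points. -/
def IsIndexPathUpTo (f : Lbl) (p : ℕ → List ℕ) (N : ℕ) : Prop :=
  (∀ i, i ≤ N → f (p i) ≠ none) ∧
  (∀ i, i < N → ∃ n : ℕ, p (i + 1) = p i ++ [n]) ∧
  IndexSequentAt f (p 0) ∧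
  (∀ i, i < N → CaseAdd2At f (p i) → p (i + 1) = p i ++ [0] → SwitchingPoint f (p i))

/-- An infinite index path in `f`. -/
def IsInfIndexPath (f : Lbl) (p : ℕ → List ℕ) : Prop :=
  IsInfPath f p ∧
  IndexSequentAt f (p 0) ∧
  (∀ i, CaseAdd2At f (p i) → p (i + 1) = p i ++ [0] → SwitchingPoint f (p i))

/-- The child index chosen by the rightmost path: the right assumption of
    `(Case Add2)`, the unique premise otherwise. -/
def rightIdx : Rule → ℕ := fun r =>
  match r with
  | .caseAdd2 _ _ _ _ _ _ => 1
  | _ => 0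

/-- One step of the rightmost path in `f`. -/
def RightStep (f : Lbl) (σ σ' : List ℕ) : Prop :=
  ∃ S r, f σ = some (S, r) ∧ σ' = σ ++ [rightIdx r] ∧ f σ' ≠ none

/-- `A(Γ ⊢ Δ)` of Lemma `abc_relations`. -/
def Aset (S : Seq) : Set Tm :=
  {a | (∃ b c, Fm.add2 a b c ∈ S.ant) ∨ (∃ b c, Fm.add1 a b c ∈ S.suc) ∨ a = Tm.zero}

/-- `BC(Γ ⊢ Δ)` of Lemma `abc_relations`. -/
def BCset (S : Seq) : Set Tm :=
  {t | (∃ a c, Fm.add2 a t c ∈ S.ant) ∨ (∃ a b, Fm.add2 a b t ∈ S.ant) ∨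
       (∃ a c, Fm.add1 a t c ∈ S.suc) ∨ (∃ a b, Fm.add1 a b t ∈ S.suc)}

/-- The rules that can occur in a cut-free cycle-normal `CLKID^ω_a` proof of
    `Add2(x,y,z) ⊢ Add1(x,y,z)` (plus bud labels). -/
def allowedRule (r : Rule) : Prop :=
  r = Rule.bud ∨ r = Rule.weak ∨ (∃ θ, r = Rule.subst θ) ∨
  (∃ v1 v2 t u, r = Rule.eqLa v1 v2 t u) ∨
  (∃ a b c x y z, r = Rule.caseAdd2 a b c x y z) ∨
  r = Rule.add1R1 ∨ (∃ a b c, r = Rule.add1R2 a b c)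

/-! ### Auxiliary development -/

section Aux

/-! #### Basic term lemmas -/

lemma sIter_s (n : ℕ) (t : Tm) : sIter n (Tm.s t) = Tm.s (sIter n t) := by
  induction n with
  | zero => rfl
  | succ n ih => simp [sIter, ih]

lemma sIter_add (n m : ℕ) (t : Tm) : sIter n (sIter m t) = sIter (n + m) t := by
  induction n with
  | zero => simp [sIter]
  | succ n ih =>
    have h : n + 1 + m = (n + m) + 1 := by omega
    rw [h]
    simp [sIter, ih]

lemma subst_sIter (θ : ℕ → Tm) (n : ℕ) (t : Tm) :
    (sIter n t).subst θ = sIter n (t.subst θ) := by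
  induction n with
  | zero => rfl
  | succ n ih => simp [sIter, Tm.subst, ih]

lemma fv_sIter (n : ℕ) (t : Tm) : (sIter n t).fv = t.fv := by
  induction n with
  | zero => rfl
  | succ n ih => simp [sIter, Tm.fv, ih]

lemma subst_id_of_fv {θ : ℕ → Tm} {t : Tm} (h : ∀ i ∈ t.fv, θ i = Tm.var i) :
    t.subst θ = t := by
  induction t with
  | var i => exact h i (by simp [Tm.fv])
  | zero => rfl
  | s t ih => simp [Tm.subst]; exact ih (fun i hi => h i (by simpa [Tm.fv] using hi))

lemma sIter_var_inj {n m i j : ℕ} (h : sIter n (Tm.var i) = sIter m (Tm.var j)) :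
    n = m ∧ i = j := by
  induction n generalizing m with
  | zero =>
    cases m with
    | zero => simpa [sIter] using h
    | succ m => simp [sIter] at h
  | succ n ih =>
    cases m with
    | zero => simp [sIter] at h
    | succ m =>
      simp only [sIter, Tm.s.injEq] at h
      obtain ⟨h1, h2⟩ := ih h
      exact ⟨by omega, h2⟩

lemma sIter_var_ne_zero {n m i : ℕ} : sIter n (Tm.var i) ≠ sIter m Tm.zero := by
  induction n generalizing m with
  | zero =>
    cases m with
    | zero => simp [sIter]
    | succ m => simp [sIter]
  | succ n ih =>
    cases m with
    | zero => simp [sIter]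
    | succ m =>
      simp only [sIter, ne_eq, Tm.s.injEq]
      exact ih

/-! #### EqvTm basics -/

lemma eqv_closure {A : Set Fm} {R : Tm → Tm → Prop}
    (hbase : ∀ p q, Fm.eq p q ∈ A → R p q)
    (hrefl : ∀ t, R t t)
    (hsymm : ∀ {t u}, R t u → R u t)
    (htrans : ∀ {t u v}, R t u → R u v → R t v)
    (hs : ∀ {t u}, R t u → R (Tm.s t) (Tm.s u)) :
    ∀ {t u}, EqvTm A t u → R t u := by
  intro t u h
  induction h with
  | base h => exact hbase _ _ h
  | refl t => exact hrefl t
  | symm _ ih => exact hsymm ih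
  | trans _ _ ih1 ih2 => exact htrans ih1 ih2
  | sCongr _ ih => exact hs ih

lemma eqv_mono {A B : Set Fm} (h : ∀ p q, Fm.eq p q ∈ A → Fm.eq p q ∈ B) :
    ∀ {t u}, EqvTm A t u → EqvTm B t u :=
  eqv_closure (fun p q hp => .base (h p q hp)) (fun t => .refl t)
    (fun h => h.symm) (fun h1 h2 => h1.trans h2) (fun h => h.sCongr)

lemma eqv_of_base {A B : Set Fm} (h : ∀ p q, Fm.eq p q ∈ A → EqvTm B p q) :
    ∀ {t u}, EqvTm A t u → EqvTm B t u :=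
  eqv_closure h (fun t => .refl t) (fun h => h.symm) (fun h1 h2 => h1.trans h2)
    (fun h => h.sCongr)

lemma eqv_map {A B : Set Fm} {θ : ℕ → Tm}
    (h : ∀ p q, Fm.eq p q ∈ A → EqvTm B (p.subst θ) (q.subst θ)) :
    ∀ {t u}, EqvTm A t u → EqvTm B (t.subst θ) (u.subst θ) :=
  eqv_closure (R := fun t u => EqvTm B (t.subst θ) (u.subst θ)) h
    (fun t => .refl _) (fun h => h.symm) (fun h1 h2 => h1.trans h2)
    (fun h => h.sCongr)

lemma eqv_sIter {A : Set Fm} {t u : Tm} (h : EqvTm A t u) (n : ℕ) :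
    EqvTm A (sIter n t) (sIter n u) := by
  induction n with
  | zero => exact h
  | succ n ih => exact ih.sCongr

lemma eqv_no_eq {A : Set Fm} (h : ∀ p q, Fm.eq p q ∉ A) {t u : Tm}
    (he : EqvTm A t u) : t = u :=
  eqv_closure (R := Eq) (fun p q hp => absurd hp (h p q)) (fun _ => rfl)
    (fun h => h.symm) (fun h1 h2 => h1.trans h2) (fun h => by rw [h]) he

/-! #### DepTm basics -/

lemma dep_refl {A : Set Fm} (t : Tm) : DepTm A t t := ⟨0, 0, .refl t⟩

lemma dep_symm {A : Set Fm} {t u : Tm} (h : DepTm A t u) : DepTm A u t := by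
  obtain ⟨n, m, h⟩ := h; exact ⟨m, n, h.symm⟩

lemma dep_of_eqv {A : Set Fm} {t u : Tm} (h : EqvTm A t u) : DepTm A t u :=
  ⟨0, 0, h⟩

lemma dep_trans {A : Set Fm} {t u v : Tm} (h1 : DepTm A t u) (h2 : DepTm A u v) :
    DepTm A t v := by
  obtain ⟨n, m, h1⟩ := h1
  obtain ⟨n', m', h2⟩ := h2
  refine ⟨n' + n, m + m', ?_⟩
  have h1' := eqv_sIter h1 n'
  have h2' := eqv_sIter h2 m
  rw [sIter_add, sIter_add] at h1'
  rw [sIter_add, sIter_add] at h2'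
  have e : n' + m = m + n' := Nat.add_comm _ _
  exact h1'.trans (e ▸ h2')

lemma dep_s_right {A : Set Fm} {t u : Tm} : DepTm A t (Tm.s u) ↔ DepTm A t u := by
  constructor
  · rintro ⟨n, m, h⟩
    rw [sIter_s] at h
    exact ⟨n, m + 1, h⟩
  · rintro ⟨n, m, h⟩
    exact ⟨n + 1, m, by rw [sIter_s]; exact h.sCongr⟩

lemma dep_s_left {A : Set Fm} {t u : Tm} : DepTm A (Tm.s t) u ↔ DepTm A t u := by
  constructor
  · intro h; exact dep_symm (dep_s_right.mp (dep_symm h))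
  · intro h; exact dep_symm (dep_s_right.mpr (dep_symm h))

lemma dep_sIter_right {A : Set Fm} {t u : Tm} (n : ℕ) :
    DepTm A t (sIter n u) ↔ DepTm A t u := by
  induction n with
  | zero => rfl
  | succ n ih => rw [sIter]; rw [dep_s_right]; exact ih

lemma dep_sIter_left {A : Set Fm} {t u : Tm} (n : ℕ) :
    DepTm A (sIter n t) u ↔ DepTm A t u := by
  constructor
  · intro h; exact dep_symm ((dep_sIter_right n).mp (dep_symm h))
  · intro h; exact dep_symm ((dep_sIter_right n).mpr (dep_symm h))

lemma dep_congr_left {A : Set Fm} {t t' u : Tm} (h : EqvTm A t t') :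
    DepTm A t u ↔ DepTm A t' u :=
  ⟨fun hd => dep_trans (dep_of_eqv h.symm) hd, fun hd => dep_trans (dep_of_eqv h) hd⟩

/-! #### Head reflection for formula substitution -/

lemma subst_eq_eqF {θ : ℕ → Tm} {ψ : Fm} {a b : Tm} (h : Fm.subst θ ψ = .eq a b) :
    ∃ A B, ψ = .eq A B ∧ a = A.subst θ ∧ b = B.subst θ := by
  cases ψ <;> simp [Fm.subst] at h
  exact ⟨_, _, rfl, h.1.symm, h.2.symm⟩

lemma subst_eq_add1 {θ : ℕ → Tm} {ψ : Fm} {a b c : Tm}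
    (h : Fm.subst θ ψ = .add1 a b c) :
    ∃ A B C, ψ = .add1 A B C ∧ a = A.subst θ ∧ b = B.subst θ ∧ c = C.subst θ := by
  cases ψ <;> simp [Fm.subst] at h
  exact ⟨_, _, _, rfl, h.1.symm, h.2.1.symm, h.2.2.symm⟩

lemma subst_eq_add2 {θ : ℕ → Tm} {ψ : Fm} {a b c : Tm}
    (h : Fm.subst θ ψ = .add2 a b c) :
    ∃ A B C, ψ = .add2 A B C ∧ a = A.subst θ ∧ b = B.subst θ ∧ c = C.subst θ := by
  cases ψ <;> simp [Fm.subst] at h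
  exact ⟨_, _, _, rfl, h.1.symm, h.2.1.symm, h.2.2.symm⟩

/-! #### Shape invariants and separation -/

def shapeL (φ : Fm) : Prop := (∃ t u, φ = Fm.eq t u) ∨ (∃ a b c, φ = Fm.add2 a b c)

def shapeR (φ : Fm) : Prop := ∃ a b c, φ = Fm.add1 a b c

def Inv (S : Seq) : Prop := (∀ φ ∈ S.ant, shapeL φ) ∧ (∀ φ ∈ S.suc, shapeR φ)

def SEPP (S : Seq) : Prop := ∀ t ∈ Aset S, ∀ u ∈ BCset S, ¬ DepTm (antSet S) t u

def GInv (S : Seq) : Prop := Inv S ∧ SEPP S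

lemma mem_Aset_add2 {S : Seq} {a b c : Tm} (h : Fm.add2 a b c ∈ S.ant) : a ∈ Aset S :=
  Or.inl ⟨b, c, h⟩

lemma mem_Aset_add1 {S : Seq} {a b c : Tm} (h : Fm.add1 a b c ∈ S.suc) : a ∈ Aset S :=
  Or.inr (Or.inl ⟨b, c, h⟩)

lemma zero_mem_Aset (S : Seq) : Tm.zero ∈ Aset S := Or.inr (Or.inr rfl)

lemma mem_BCset_add2b {S : Seq} {a b c : Tm} (h : Fm.add2 a b c ∈ S.ant) : b ∈ BCset S :=
  Or.inl ⟨a, c, h⟩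

lemma mem_BCset_add2c {S : Seq} {a b c : Tm} (h : Fm.add2 a b c ∈ S.ant) : c ∈ BCset S :=
  Or.inr (Or.inl ⟨a, b, h⟩)

lemma mem_BCset_add1b {S : Seq} {a b c : Tm} (h : Fm.add1 a b c ∈ S.suc) : b ∈ BCset S :=
  Or.inr (Or.inr (Or.inl ⟨a, c, h⟩))

lemma mem_BCset_add1c {S : Seq} {a b c : Tm} (h : Fm.add1 a b c ∈ S.suc) : c ∈ BCset S :=
  Or.inr (Or.inr (Or.inr ⟨a, b, h⟩))

lemma mem_B1_intro {S : Seq} {a b c : Tm} (h : Fm.add1 a b c ∈ S.suc) : b ∈ B1 S :=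
  ⟨a, c, h⟩

lemma mem_Cset_ant {S : Seq} {a b c : Tm} (h : Fm.add2 a b c ∈ S.ant) : c ∈ Cset S :=
  Or.inl ⟨a, b, h⟩

lemma mem_Cset_suc {S : Seq} {a b c : Tm} (h : Fm.add1 a b c ∈ S.suc) : c ∈ Cset S :=
  Or.inr ⟨a, b, h⟩

lemma B1_sub_BCset {S : Seq} {b : Tm} (h : b ∈ B1 S) : b ∈ BCset S := by
  obtain ⟨a, c, h⟩ := h; exact mem_BCset_add1b h

lemma Cset_sub_BCset {S : Seq} {c : Tm} (h : c ∈ Cset S) : c ∈ BCset S := by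
  rcases h with ⟨a, b, h⟩ | ⟨a, b, h⟩
  · exact mem_BCset_add2c h
  · exact mem_BCset_add1c h

/-! #### The swap lemma for (= L_a) -/

lemma subst_swap {A : Set Fm} {v1 v2 : ℕ} {t u : Tm} (h : Fm.eq t u ∈ A) :
    ∀ w : Tm, EqvTm A (w.subst (sub2 v1 v2 u t)) (w.subst (sub2 v1 v2 t u)) := by
  intro w
  induction w with
  | var i =>
    by_cases h1 : i = v1
    · simp only [Tm.subst, sub2, h1, if_pos rfl]
      exact (EqvTm.base h).symm
    · by_cases h2 : i = v2
      · simp only [Tm.subst, sub2, if_neg h1, if_pos h2]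
        exact EqvTm.base h
      · simp only [Tm.subst, sub2, if_neg h1, if_neg h2]
        exact .refl _
  | zero => exact .refl _
  | s w ih => exact ih.sCongr

lemma eqv_eqLa {Γ : Finset Fm} {v1 v2 : ℕ} {t u : Tm} :
    ∀ {w w'},
      EqvTm (↑(insert (Fm.eq t u) (Γ.image (Fm.subst (sub2 v1 v2 u t)))) : Set Fm) w w' →
      EqvTm (↑(insert (Fm.eq t u) (Γ.image (Fm.subst (sub2 v1 v2 t u)))) : Set Fm) w w' := by
  have htu : Fm.eq t u ∈
      (↑(insert (Fm.eq t u) (Γ.image (Fm.subst (sub2 v1 v2 t u)))) : Set Fm) := by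
    simp
  apply eqv_of_base
  intro p q hp
  simp only [Finset.coe_insert, Set.mem_insert_iff, Finset.coe_image, Set.mem_image,
    Finset.mem_coe] at hp
  rcases hp with hp | ⟨ψ, hψ, hps⟩
  · injection hp with h1 h2
    subst h1; subst h2
    exact EqvTm.base htu
  · obtain ⟨Pt, Qt, hψeq, hpeq, hqeq⟩ := subst_eq_eqF hps
    subst hψeq; subst hpeq; subst hqeq
    have hmid : Fm.eq (Pt.subst (sub2 v1 v2 t u)) (Qt.subst (sub2 v1 v2 t u)) ∈
        (↑(insert (Fm.eq t u) (Γ.image (Fm.subst (sub2 v1 v2 t u)))) : Set Fm) := by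
      simp only [Finset.coe_insert, Set.mem_insert_iff, Finset.coe_image, Set.mem_image,
        Finset.mem_coe]
      exact Or.inr ⟨Fm.eq Pt Qt, hψ, rfl⟩
    exact ((subst_swap htu Pt).trans (EqvTm.base hmid)).trans (subst_swap htu Qt).symm

/-! #### Elimination of fresh variables for the right premise of (Case Add2) -/

/-- The translation map, undefined exactly on `var x`. -/
def Gf (x : ℕ) (a : Tm) (N : Tm → Tm) : Tm → Option Tm
  | .var i => if i = x then none else some (N (.var i))
  | .zero => some (N .zero)
  | .s w =>
    match Gf x a N w with
    | none => some a
    | some p => some (.s p)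

lemma Gf_of_not_fv {x : ℕ} {a : Tm} {N : Tm → Tm} (hN : ∀ v, N (.s v) = .s (N v))
    {w : Tm} (h : x ∉ w.fv) : Gf x a N w = some (N w) := by
  induction w with
  | var i =>
    have : i ≠ x := fun e => h (by simp [Tm.fv, e])
    simp [Gf, this]
  | zero => simp [Gf]
  | s w ih =>
    have hw : x ∉ w.fv := by simpa [Tm.fv] using h
    simp [Gf, ih hw, hN]

lemma Gf_none_iff {x : ℕ} {a : Tm} {N : Tm → Tm} {w : Tm} :
    Gf x a N w = none ↔ w = Tm.var x := by
  induction w with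
  | var i => by_cases h : i = x <;> simp [Gf, h]
  | zero => simp [Gf]
  | s w ih =>
    constructor
    · intro h
      cases hg : Gf x a N w <;> simp [Gf, hg] at h
    · intro h; exact absurd h (by simp)

def Rr (A : Set Fm) (x : ℕ) (a : Tm) (N : Tm → Tm) (w w' : Tm) : Prop :=
  match Gf x a N w, Gf x a N w' with
  | some p, some q => EqvTm A p q
  | none, none => True
  | _, _ => False

lemma Rr_refl (A : Set Fm) (x : ℕ) (a : Tm) (N : Tm → Tm) (w : Tm) : Rr A x a N w w := by
  unfold Rr
  cases h : Gf x a N w <;> simp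
  exact .refl _

lemma Rr_symm {A x a N} {w w' : Tm} (h : Rr A x a N w w') : Rr A x a N w' w := by
  unfold Rr at *
  cases h1 : Gf x a N w <;> cases h2 : Gf x a N w' <;> simp [h1, h2] at h ⊢
  exact h.symm

lemma Rr_trans {A x a N} {w w' w'' : Tm} (h1 : Rr A x a N w w') (h2 : Rr A x a N w' w'') :
    Rr A x a N w w'' := by
  unfold Rr at *
  cases g1 : Gf x a N w <;> cases g2 : Gf x a N w' <;> cases g3 : Gf x a N w'' <;>
    simp [g1, g2, g3] at h1 h2 ⊢
  exact h1.trans h2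

lemma Rr_s {A x a N} (hN : ∀ v, N (.s v) = .s (N v)) {w w' : Tm}
    (h : Rr A x a N w w') : Rr A x a N (.s w) (.s w') := by
  unfold Rr at *
  cases g1 : Gf x a N w <;> cases g2 : Gf x a N w' <;> simp [g1, g2] at h
  · -- both none : w = w' = var x
    have e1 : w = Tm.var x := Gf_none_iff.mp g1
    have e2 : w' = Tm.var x := Gf_none_iff.mp g2
    subst e1; subst e2
    simp [Gf]
    exact .refl _
  · -- both some
    simp only [Gf, g1, g2]
    exact h.sCongr

lemma eqv_to_Rr {A' A : Set Fm} {x : ℕ} {a : Tm} {N : Tm → Tm}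
    (hN : ∀ v, N (.s v) = .s (N v))
    (hbase : ∀ p q, Fm.eq p q ∈ A' → Rr A x a N p q) :
    ∀ {w w'}, EqvTm A' w w' → Rr A x a N w w' :=
  eqv_closure hbase (Rr_refl A x a N) Rr_symm Rr_trans (Rr_s hN)

/-! #### Merge analysis for the left premise of (Case Add2) -/

def InP (A : Set Fm) (a : Tm) (v : Tm) : Prop := DepTm A v a ∨ DepTm A v Tm.zero

def InQ (A : Set Fm) (b c : Tm) (v : Tm) : Prop := DepTm A v b ∨ DepTm A v c

def R2 (A : Set Fm) (a b c : Tm) (v w : Tm) : Prop :=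
  EqvTm A v w ∨ (InP A a v ∧ InP A a w) ∨ (InQ A b c v ∧ InQ A b c w)

lemma InP_congr {A : Set Fm} {a v w : Tm} (h : EqvTm A v w) (hw : InP A a w) :
    InP A a v := by
  rcases hw with hw | hw
  · exact Or.inl (dep_trans (dep_of_eqv h) hw)
  · exact Or.inr (dep_trans (dep_of_eqv h) hw)

lemma InQ_congr {A : Set Fm} {b c v w : Tm} (h : EqvTm A v w) (hw : InQ A b c w) :
    InQ A b c v := by
  rcases hw with hw | hw
  · exact Or.inl (dep_trans (dep_of_eqv h) hw)
  · exact Or.inr (dep_trans (dep_of_eqv h) hw)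

lemma InP_s {A : Set Fm} {a v : Tm} : InP A a (.s v) ↔ InP A a v := by
  unfold InP; rw [dep_s_left, dep_s_left]

lemma InQ_s {A : Set Fm} {b c v : Tm} : InQ A b c (.s v) ↔ InQ A b c v := by
  unfold InQ; rw [dep_s_left, dep_s_left]

lemma InP_sIter {A : Set Fm} {a v : Tm} (n : ℕ) : InP A a (sIter n v) ↔ InP A a v := by
  unfold InP; rw [dep_sIter_left, dep_sIter_left]

lemma InQ_sIter {A : Set Fm} {b c v : Tm} (n : ℕ) : InQ A b c (sIter n v) ↔ InQ A b c v := by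
  unfold InQ; rw [dep_sIter_left, dep_sIter_left]

lemma eqv_to_R2 {A : Set Fm} {a b c : Tm}
    (hPQ : ∀ v, InP A a v → InQ A b c v → False) :
    ∀ {v w}, EqvTm (insert (Fm.eq a Tm.zero) (insert (Fm.eq b c) A)) v w →
      R2 A a b c v w := by
  apply eqv_closure
  · intro p q hp
    rcases hp with hp | hp | hp
    · injection hp with h1 h2
      subst h1; subst h2
      exact Or.inr (Or.inl ⟨Or.inl (dep_refl _), Or.inr (dep_refl _)⟩)
    · injection hp with h1 h2
      subst h1; subst h2
      exact Or.inr (Or.inr ⟨Or.inl (dep_refl _), Or.inr (dep_refl _)⟩)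
    · exact Or.inl (EqvTm.base hp)
  · intro t; exact Or.inl (.refl t)
  · intro t v h
    rcases h with h | ⟨h1, h2⟩ | ⟨h1, h2⟩
    · exact Or.inl h.symm
    · exact Or.inr (Or.inl ⟨h2, h1⟩)
    · exact Or.inr (Or.inr ⟨h2, h1⟩)
  · intro t v w h1 h2
    rcases h1 with h1 | ⟨ha, hb⟩ | ⟨ha, hb⟩ <;>
      rcases h2 with h2 | ⟨hc, hd⟩ | ⟨hc, hd⟩
    · exact Or.inl (h1.trans h2)
    · exact Or.inr (Or.inl ⟨InP_congr h1 hc, hd⟩)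
    · exact Or.inr (Or.inr ⟨InQ_congr h1 hc, hd⟩)
    · exact Or.inr (Or.inl ⟨ha, InP_congr h2.symm hb⟩)
    · exact Or.inr (Or.inl ⟨ha, hd⟩)
    · exact (hPQ _ hb hc).elim
    · exact Or.inr (Or.inr ⟨ha, InQ_congr h2.symm hb⟩)
    · exact (hPQ _ hc hb).elim
    · exact Or.inr (Or.inr ⟨ha, hd⟩)
  · intro t v h
    rcases h with h | ⟨h1, h2⟩ | ⟨h1, h2⟩
    · exact Or.inl h.sCongr
    · exact Or.inr (Or.inl ⟨InP_s.mpr h1, InP_s.mpr h2⟩)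
    · exact Or.inr (Or.inr ⟨InQ_s.mpr h1, InQ_s.mpr h2⟩)

end Aux

/-! #### Tree unfolding machinery -/

section Tree

open Classical in
noncomputable def normP (P : PreProof) (π : List ℕ) : List ℕ :=
  if budAt P.D.label π then P.C π else π

noncomputable def resAuxP (P : PreProof) : List ℕ → List ℕ
  | [] => []
  | i :: l => normP P (resAuxP P l ++ [i])

noncomputable def resP (P : PreProof) (σ : List ℕ) : List ℕ := resAuxP P σ.reverse

lemma resP_nil (P : PreProof) : resP P [] = [] := rfl

lemma resP_snoc (P : PreProof) (σ : List ℕ) (i : ℕ) :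
    resP P (σ ++ [i]) = normP P (resP P σ ++ [i]) := by
  simp [resP, resAuxP]

lemma normP_eq_self {P : PreProof} {π : List ℕ} (h : ¬ budAt P.D.label π) :
    normP P π = π := by
  rw [normP]; exact if_neg h

lemma normP_bud {P : PreProof} {π : List ℕ} (h : budAt P.D.label π) :
    normP P π = P.C π := by
  rw [normP]; exact if_pos h

lemma bud_no_children {P : PreProof} {σ : List ℕ} {S : Seq}
    (h : P.D.label σ = some (S, Rule.bud)) :
    ∀ ρ : List ℕ, ρ ≠ [] → P.D.label (σ ++ ρ) = none := by
  intro ρ hρ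
  rcases P.D.wf σ S Rule.bud h with ⟨_, hnone⟩ | ⟨hne, _⟩
  · cases ρ with
    | nil => exact absurd rfl hρ
    | cons i ρ' =>
      by_contra hcon
      have h2 : P.D.label (σ ++ [i]) ≠ none := by
        apply P.D.prefix_closed (σ ++ [i]) ρ'
        rw [List.append_assoc]
        exact hcon
      exact h2 (hnone i)
  · exact absurd rfl hne

lemma budAt_prefix_false {P : PreProof} {σ α : List ℕ}
    (hσ : P.D.label σ ≠ none) (hpre : α <+: σ) (hne : α ≠ σ)
    (hb : budAt P.D.label α) : False := by
  obtain ⟨S, hS⟩ := hb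
  obtain ⟨ρ, rfl⟩ := hpre
  have hρ : ρ ≠ [] := by rintro rfl; simp at hne
  exact hσ (bud_no_children hS ρ hρ)

lemma companion_ssub {P : PreProof} (hcn : P.CycleNormal) {σ : List ℕ} {S : Seq}
    (h : P.D.label σ = some (S, Rule.bud)) :
    P.C σ <+: σ ∧ (P.C σ).length < σ.length := by
  have hpre := hcn σ S h
  refine ⟨hpre, ?_⟩
  rcases Nat.lt_or_ge (P.C σ).length σ.length with h1 | h1
  · exact h1
  · exfalso
    have hlen : (P.C σ).length = σ.length := le_antisymm hpre.length_le h1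
    have heq : P.C σ = σ := List.IsPrefix.eq_of_length hpre hlen
    obtain ⟨r, hr, hrne⟩ := P.comp σ S h
    rw [heq, h] at hr
    injection hr with hr'
    injection hr' with _ hr''
    exact hrne hr''.symm

lemma root_not_bud {P : PreProof} (hcn : P.CycleNormal) : ¬ budAt P.D.label [] := by
  rintro ⟨S, hS⟩
  have := (companion_ssub hcn hS).2
  simp at this

lemma resP_eq_self {P : PreProof} {σ : List ℕ}
    (h : ∀ α, α <+: σ → ¬ budAt P.D.label α) : resP P σ = σ := by
  induction σ using List.reverseRecOn with
  | nil => rfl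
  | append_singleton σ i ih =>
    rw [resP_snoc, ih (fun α hα hb => h α (hα.trans (List.prefix_append σ [i])) hb)]
    exact normP_eq_self (h _ (List.prefix_refl _))

lemma resP_bud {P : PreProof} (hcn : P.CycleNormal) {σ : List ℕ}
    (hb : budAt P.D.label σ) : resP P σ = P.C σ := by
  obtain ⟨S, hS⟩ := hb
  have hσne : P.D.label σ ≠ none := by rw [hS]; simp
  cases σ using List.reverseRecOn with
  | nil => exact absurd ⟨S, hS⟩ (root_not_bud hcn)
  | append_singleton σ' i =>
    rw [resP_snoc]
    rw [resP_eq_self (fun α hα hb' => by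
      refine absurd hb' ?_
      intro hb''
      refine budAt_prefix_false hσne (hα.trans (List.prefix_append σ' [i])) ?_ hb''
      intro he
      have := hα.length_le
      rw [he] at this
      simp at this)]
    exact normP_bud ⟨S, hS⟩

lemma resP_comp {P : PreProof} (hcn : P.CycleNormal) {σ : List ℕ} {S : Seq}
    (hS : P.D.label σ = some (S, Rule.bud)) : resP P (P.C σ) = P.C σ := by
  have hσne : P.D.label σ ≠ none := by rw [hS]; simp
  obtain ⟨hpre, hlt⟩ := companion_ssub hcn hS
  apply resP_eq_self
  intro α hα hb
  refine budAt_prefix_false hσne (hα.trans hpre) ?_ hb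
  intro he
  have := hα.length_le
  rw [he] at this
  omega

lemma resP_append_congr {P : PreProof} {σ σ' : List ℕ} (h : resP P σ = resP P σ') :
    ∀ ρ, resP P (σ ++ ρ) = resP P (σ' ++ ρ) := by
  intro ρ
  induction ρ using List.reverseRecOn with
  | nil => simpa using h
  | append_singleton ρ i ih =>
    rw [← List.append_assoc, ← List.append_assoc, resP_snoc, resP_snoc, ih]

lemma resP_not_bud {P : PreProof} (hcn : P.CycleNormal) (σ : List ℕ) :
    ¬ budAt P.D.label (resP P σ) := by
  induction σ using List.reverseRecOn with
  | nil => exact root_not_bud hcn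
  | append_singleton σ i ih =>
    rw [resP_snoc]
    by_cases hb : budAt P.D.label (resP P σ ++ [i])
    · rw [normP_bud hb]
      obtain ⟨S, hS⟩ := hb
      obtain ⟨r, hr, hrne⟩ := P.comp _ _ hS
      rintro ⟨S', hS'⟩
      rw [hr] at hS'
      injection hS' with h'
      injection h' with _ h''
      exact hrne h''
    · rw [normP_eq_self hb]
      exact hb

lemma T_eq_res {P : PreProof} (hcn : P.CycleNormal) {T : Lbl} (hT : IsUnfolding P T) :
    ∀ σ, T σ = P.D.label (resP P σ) := by
  obtain ⟨hT1, hT2, hT3⟩ := hT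
  have main : ∀ n σ, List.length σ ≤ n → T σ = P.D.label (resP P σ) := by
    intro n
    induction n with
    | zero =>
      intro σ hσ
      have hnil : σ = [] := List.eq_nil_of_length_eq_zero (Nat.le_zero.mp hσ)
      subst hnil
      rw [resP_nil]
      exact hT1 [] P.D.root_def (root_not_bud hcn)
    | succ n ih =>
      intro σ hσ
      by_cases hb : ∃ σ₁, σ₁ <+: σ ∧ budAt P.D.label σ₁
      · obtain ⟨σ₁, ⟨ρ, rfl⟩, hbud⟩ := hb
        obtain ⟨S, hS⟩ := hbud
        have h2 := hT2 σ₁ ρ ⟨S, hS⟩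
        have hlt := (companion_ssub hcn hS).2
        have hlen : List.length (P.C σ₁ ++ ρ) ≤ n := by
          rw [List.length_append] at hσ ⊢
          omega
        rw [h2, ih _ hlen]
        have hre : resP P σ₁ = resP P (P.C σ₁) := by
          rw [resP_bud hcn ⟨S, hS⟩, resP_comp hcn hS]
        rw [resP_append_congr hre ρ]
      · push_neg at hb
        have hres : resP P σ = σ := resP_eq_self (fun α hα => hb α hα)
        rw [hres]
        by_cases hn : P.D.label σ = none
        · rw [hn]
          exact hT3 σ hn (fun σ₁ hσ₁ => hb σ₁ hσ₁)
        · exact hT1 σ hn (hb σ (List.prefix_refl _))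
  exact fun σ => main σ.length σ (le_refl _)

lemma GTC_of_unfolding {P : PreProof} (hcn : P.CycleNormal) {T T' : Lbl}
    (hT : IsUnfolding P T) (hT' : IsUnfolding P T') (h : GTC T') : GTC T := by
  have he : T = T' := funext (fun σ => (T_eq_res hcn hT σ).trans (T_eq_res hcn hT' σ).symm)
  rwa [he]

lemma T_node {P : PreProof} (hcn : P.CycleNormal) {T : Lbl} (hT : IsUnfolding P T)
    {σ : List ℕ} {S : Seq} {r : Rule} (h : T σ = some (S, r)) :
    r ≠ Rule.bud ∧ ∃ prems, Inf r S prems ∧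
      (∀ (j : ℕ) (hj : j < prems.length),
        ∃ r', T (σ ++ [j]) = some (prems.get ⟨j, hj⟩, r')) ∧
      (∀ j : ℕ, prems.length ≤ j → T (σ ++ [j]) = none) := by
  have hres := T_eq_res hcn hT σ
  have hlab : P.D.label (resP P σ) = some (S, r) := by rw [← hres, h]
  have hnb : ¬ budAt P.D.label (resP P σ) := resP_not_bud hcn σ
  have hrne : r ≠ Rule.bud := fun e => hnb ⟨S, by rw [hlab, e]⟩
  rcases P.D.wf _ _ _ hlab with ⟨he, _⟩ | ⟨_, prems, hinf, hch⟩
  · exact absurd he hrne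
  refine ⟨hrne, prems, hinf, ?_, ?_⟩
  · intro j hj
    obtain ⟨r₀, hr₀⟩ := hch.1 ⟨j, hj⟩
    have hchild := T_eq_res hcn hT (σ ++ [j])
    rw [resP_snoc] at hchild
    by_cases hb : budAt P.D.label (resP P σ ++ [j])
    · obtain ⟨S₁, hS₁⟩ := hb
      have hS₁' := hS₁
      rw [hr₀] at hS₁'
      injection hS₁' with h'
      injection h' with hSeq _
      obtain ⟨r', hr', hr'ne⟩ := P.comp _ _ hS₁
      rw [normP_bud ⟨S₁, hS₁⟩] at hchild
      rw [hr'] at hchild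
      rw [← hSeq] at hchild
      exact ⟨r', hchild⟩
    · rw [normP_eq_self hb] at hchild
      rw [hr₀] at hchild
      exact ⟨r₀, hchild⟩
  · intro j hj
    have hnone := hch.2 j hj
    have hchild := T_eq_res hcn hT (σ ++ [j])
    rw [resP_snoc] at hchild
    rw [normP_eq_self (fun hb => by
      obtain ⟨S₁, hS₁⟩ := hb
      rw [hnone] at hS₁
      exact nomatch hS₁)] at hchild
    rw [hchild, hnone]

end Tree

/-! #### Index values -/

@[simp] lemma antSet_mk (Γ Δ : Finset Fm) : antSet ⟨Γ, Δ⟩ = (↑Γ : Set Fm) := rfl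

def IVal (S : Seq) (b : Tm) (ι : ℤ) : Prop :=
  ∃ a' b' c', Fm.add1 a' b' c' ∈ S.suc ∧ ∃ n m : ℕ,
    EqvTm (antSet S) (sIter n b) (sIter m b') ∧ ι = (m : ℤ) - (n : ℤ)

/-- Two index values of the same `b` agree, given condition (ii) of index sequents. -/
lemma IVal_unique {S : Seq} {b : Tm} {ι ι' : ℤ}
    (hii : ∀ b₁ ∈ B1 S, ∀ b₂ ∈ B1 S, ∀ n m : ℕ,
      EqvTm (antSet S) (sIter n b₁) (sIter m b₂) → n = m)
    (h : IVal S b ι) (h' : IVal S b ι') : ι = ι' := by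
  obtain ⟨a1, b1, c1, hm1, n, m, he1, hv1⟩ := h
  obtain ⟨a2, b2, c2, hm2, n', m', he2, hv2⟩ := h'
  have k1 := eqv_sIter he1 n'
  have k2 := eqv_sIter he2 n
  rw [sIter_add, sIter_add] at k1
  rw [sIter_add, sIter_add] at k2
  have e : n' + n = n + n' := Nat.add_comm _ _
  have k3 : EqvTm (antSet S) (sIter (n' + m) b1) (sIter (n + m') b2) :=
    (e ▸ k1).symm.trans k2
  have := hii b1 (mem_B1_intro hm1) b2 (mem_B1_intro hm2) _ _ k3
  omega

/-! #### Generic transfer lemmas -/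

lemma dep_transfer {S' S : Seq}
    (hE : ∀ v w, EqvTm (antSet S') v w → EqvTm (antSet S) v w)
    {t u : Tm} (h : DepTm (antSet S') t u) : DepTm (antSet S) t u := by
  obtain ⟨n, m, h⟩ := h; exact ⟨n, m, hE _ _ h⟩

lemma IS_transfer {S' S : Seq}
    (hE : ∀ v w, EqvTm (antSet S') v w → EqvTm (antSet S) v w)
    (hB : ∀ b ∈ B1 S', ∃ b₀ ∈ B1 S, EqvTm (antSet S) b b₀)
    (hC : ∀ c ∈ Cset S', ∃ c₀ ∈ Cset S, DepTm (antSet S) c c₀)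
    (h : IndexSequent S) : IndexSequent S' := by
  constructor
  · intro t ht u hu hd
    obtain ⟨t₀, ht₀, het⟩ := hB t ht
    obtain ⟨c₀, hc₀, hdep⟩ := hC u hu
    refine h.1 t₀ ht₀ c₀ hc₀ ?_
    exact dep_trans (dep_of_eqv het.symm) (dep_trans (dep_transfer hE hd) hdep)
  · intro b hb b' hb' n m he
    obtain ⟨b₀, hb₀, heb⟩ := hB b hb
    obtain ⟨b₀', hb₀', heb'⟩ := hB b' hb'
    refine h.2 b₀ hb₀ b₀' hb₀' n m ?_
    exact ((eqv_sIter heb n).symm.trans (hE _ _ he)).trans (eqv_sIter heb' m)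

lemma SEPP_transfer {S' S : Seq}
    (hE : ∀ v w, EqvTm (antSet S') v w → EqvTm (antSet S) v w)
    (hA : ∀ t ∈ Aset S', ∃ t₀ ∈ Aset S, DepTm (antSet S) t t₀)
    (hBC : ∀ u ∈ BCset S', ∃ u₀ ∈ BCset S, DepTm (antSet S) u u₀)
    (h : SEPP S) : SEPP S' := by
  intro t ht u hu hd
  obtain ⟨t₀, ht₀, hdt⟩ := hA t ht
  obtain ⟨u₀, hu₀, hdu⟩ := hBC u hu
  exact h t₀ ht₀ u₀ hu₀ (dep_trans (dep_symm hdt) (dep_trans (dep_transfer hE hd) hdu))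

lemma IVal_transfer {S' S : Seq} {b b' : Tm}
    (hE : ∀ v w, EqvTm (antSet S') v w → EqvTm (antSet S) v w)
    (hbb : EqvTm (antSet S) b b')
    (hΔ : ∀ a₁ b₁ c₁, Fm.add1 a₁ b₁ c₁ ∈ S'.suc →
      ∃ a₂ b₂ c₂, Fm.add1 a₂ b₂ c₂ ∈ S.suc ∧ EqvTm (antSet S) b₁ b₂)
    {ι : ℤ} (h : IVal S' b ι) : IVal S b' ι := by
  obtain ⟨a1, b1, c1, hm, n, m, he, hv⟩ := h
  obtain ⟨a₂, b₂, c₂, hm₂, heb⟩ := hΔ _ _ _ hm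
  refine ⟨a₂, b₂, c₂, hm₂, n, m, ?_, hv⟩
  exact ((eqv_sIter hbb.symm n).trans (hE _ _ he)).trans (eqv_sIter heb m)

/-! #### Rule (Weak) -/

lemma eqv_subset {Γ' Γ : Finset Fm} (h : Γ' ⊆ Γ) :
    ∀ v w, EqvTm (↑Γ' : Set Fm) v w → EqvTm (↑Γ : Set Fm) v w := by
  intro v w
  exact eqv_mono (fun p q hp => h hp)

lemma GInv_weak {Γ Δ Γ' Δ' : Finset Fm} (hΓ : Γ' ⊆ Γ) (hΔ : Δ' ⊆ Δ)
    (h : GInv ⟨Γ, Δ⟩) : GInv ⟨Γ', Δ'⟩ := by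
  refine ⟨⟨fun φ hφ => h.1.1 φ (hΓ hφ), fun φ hφ => h.1.2 φ (hΔ hφ)⟩, ?_⟩
  apply SEPP_transfer (S := ⟨Γ, Δ⟩) (eqv_subset hΓ) ?_ ?_ h.2
  · rintro t (⟨b, c, hm⟩ | ⟨b, c, hm⟩ | rfl)
    · exact ⟨t, mem_Aset_add2 (hΓ hm), dep_refl t⟩
    · exact ⟨t, mem_Aset_add1 (hΔ hm), dep_refl t⟩
    · exact ⟨Tm.zero, zero_mem_Aset _, dep_refl _⟩
  · rintro u (⟨a, c, hm⟩ | ⟨a, b, hm⟩ | ⟨a, c, hm⟩ | ⟨a, b, hm⟩)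
    · exact ⟨u, mem_BCset_add2b (hΓ hm), dep_refl u⟩
    · exact ⟨u, mem_BCset_add2c (hΓ hm), dep_refl u⟩
    · exact ⟨u, mem_BCset_add1b (hΔ hm), dep_refl u⟩
    · exact ⟨u, mem_BCset_add1c (hΔ hm), dep_refl u⟩

lemma IS_weak {Γ Δ Γ' Δ' : Finset Fm} (hΓ : Γ' ⊆ Γ) (hΔ : Δ' ⊆ Δ)
    (h : IndexSequent ⟨Γ, Δ⟩) : IndexSequent ⟨Γ', Δ'⟩ := by
  apply IS_transfer (S := ⟨Γ, Δ⟩) (eqv_subset hΓ) ?_ ?_ h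
  · rintro b ⟨a, c, hm⟩
    exact ⟨b, mem_B1_intro (hΔ hm), EqvTm.refl b⟩
  · rintro c (⟨a, b, hm⟩ | ⟨a, b, hm⟩)
    · exact ⟨c, mem_Cset_ant (hΓ hm), dep_refl c⟩
    · exact ⟨c, mem_Cset_suc (hΔ hm), dep_refl c⟩

lemma IVal_weak {Γ Δ Γ' Δ' : Finset Fm} (hΓ : Γ' ⊆ Γ) (hΔ : Δ' ⊆ Δ) {b : Tm} {ι : ℤ}
    (h : IVal ⟨Γ', Δ'⟩ b ι) : IVal ⟨Γ, Δ⟩ b ι := by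
  apply IVal_transfer (S' := ⟨Γ', Δ'⟩) (eqv_subset hΓ) (EqvTm.refl b) ?_ h
  intro a₁ b₁ c₁ hm
  exact ⟨a₁, b₁, c₁, hΔ hm, EqvTm.refl b₁⟩

/-! #### Rule (Subst) -/

lemma eqv_push_subst {Γ : Finset Fm} {θ : ℕ → Tm} :
    ∀ {v w}, EqvTm (↑Γ : Set Fm) v w →
      EqvTm (↑(Γ.image (Fm.subst θ)) : Set Fm) (v.subst θ) (w.subst θ) := by
  apply eqv_map
  intro p q hp
  apply EqvTm.base
  simp only [Finset.coe_image, Set.mem_image, Finset.mem_coe]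
  exact ⟨Fm.eq p q, hp, rfl⟩

lemma dep_push_subst {Γ : Finset Fm} {θ : ℕ → Tm} {t u : Tm}
    (h : DepTm (↑Γ : Set Fm) t u) :
    DepTm (↑(Γ.image (Fm.subst θ)) : Set Fm) (t.subst θ) (u.subst θ) := by
  obtain ⟨n, m, h⟩ := h
  refine ⟨n, m, ?_⟩
  have := eqv_push_subst (Γ := Γ) (θ := θ) h
  rwa [subst_sIter, subst_sIter] at this

lemma GInv_subst {Γ Δ : Finset Fm} {θ : ℕ → Tm}
    (h : GInv ⟨Γ.image (Fm.subst θ), Δ.image (Fm.subst θ)⟩) : GInv ⟨Γ, Δ⟩ := by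
  constructor
  · constructor
    · intro φ hφ
      have := h.1.1 (φ.subst θ) (Finset.mem_image_of_mem _ hφ)
      rcases this with ⟨t, u, he⟩ | ⟨a, b, c, he⟩
      · obtain ⟨A, B, hψ, _, _⟩ := subst_eq_eqF he
        exact Or.inl ⟨A, B, hψ⟩
      · obtain ⟨A, B, C, hψ, _, _, _⟩ := subst_eq_add2 he
        exact Or.inr ⟨A, B, C, hψ⟩
    · intro φ hφ
      have := h.1.2 (φ.subst θ) (Finset.mem_image_of_mem _ hφ)
      obtain ⟨a, b, c, he⟩ := this
      obtain ⟨A, B, C, hψ, _, _, _⟩ := subst_eq_add1 he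
      exact ⟨A, B, C, hψ⟩
  · intro t ht u hu hd
    have hd' := dep_push_subst (θ := θ) hd
    refine h.2 (t.subst θ) ?_ (u.subst θ) ?_ hd'
    · rcases ht with ⟨b, c, hm⟩ | ⟨b, c, hm⟩ | rfl
      · exact mem_Aset_add2 (by
          have := Finset.mem_image_of_mem (Fm.subst θ) hm
          simpa [Fm.subst] using this)
      · exact mem_Aset_add1 (by
          have := Finset.mem_image_of_mem (Fm.subst θ) hm
          simpa [Fm.subst] using this)
      · exact zero_mem_Aset _
    · rcases hu with ⟨a, c, hm⟩ | ⟨a, b, hm⟩ | ⟨a, c, hm⟩ | ⟨a, b, hm⟩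
      · exact mem_BCset_add2b (by
          have := Finset.mem_image_of_mem (Fm.subst θ) hm
          simpa [Fm.subst] using this)
      · exact mem_BCset_add2c (by
          have := Finset.mem_image_of_mem (Fm.subst θ) hm
          simpa [Fm.subst] using this)
      · exact mem_BCset_add1b (by
          have := Finset.mem_image_of_mem (Fm.subst θ) hm
          simpa [Fm.subst] using this)
      · exact mem_BCset_add1c (by
          have := Finset.mem_image_of_mem (Fm.subst θ) hm
          simpa [Fm.subst] using this)

lemma IS_subst {Γ Δ : Finset Fm} {θ : ℕ → Tm}
    (h : IndexSequent ⟨Γ.image (Fm.subst θ), Δ.image (Fm.subst θ)⟩) :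
    IndexSequent ⟨Γ, Δ⟩ := by
  constructor
  · rintro t ⟨a, c, hm⟩ u hu hd
    have hd' := dep_push_subst (θ := θ) hd
    refine h.1 (t.subst θ) (mem_B1_intro (a := a.subst θ) (c := c.subst θ) ?_)
      (u.subst θ) ?_ hd'
    · have := Finset.mem_image_of_mem (Fm.subst θ) hm
      simpa [Fm.subst] using this
    · rcases hu with ⟨a', b', hm'⟩ | ⟨a', b', hm'⟩
      · exact mem_Cset_ant (by
          have := Finset.mem_image_of_mem (Fm.subst θ) hm'
          simpa [Fm.subst] using this)
      · exact mem_Cset_suc (by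
          have := Finset.mem_image_of_mem (Fm.subst θ) hm'
          simpa [Fm.subst] using this)
  · rintro b ⟨a, c, hm⟩ b' ⟨a', c', hm'⟩ n m he
    have he' := eqv_push_subst (Γ := Γ) (θ := θ) he
    rw [subst_sIter, subst_sIter] at he'
    refine h.2 (b.subst θ) (mem_B1_intro (a := a.subst θ) (c := c.subst θ) ?_)
      (b'.subst θ) (mem_B1_intro (a := a'.subst θ) (c := c'.subst θ) ?_) n m he'
    · have := Finset.mem_image_of_mem (Fm.subst θ) hm
      simpa [Fm.subst] using this
    · have := Finset.mem_image_of_mem (Fm.subst θ) hm'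
      simpa [Fm.subst] using this

lemma IVal_subst {Γ Δ : Finset Fm} {θ : ℕ → Tm} {b : Tm} {ι : ℤ}
    (h : IVal ⟨Γ, Δ⟩ b ι) :
    IVal ⟨Γ.image (Fm.subst θ), Δ.image (Fm.subst θ)⟩ (b.subst θ) ι := by
  obtain ⟨a1, b1, c1, hm, n, m, he, hv⟩ := h
  refine ⟨a1.subst θ, b1.subst θ, c1.subst θ, ?_, n, m, ?_, hv⟩
  · have := Finset.mem_image_of_mem (Fm.subst θ) hm
    simpa [Fm.subst] using this
  · have := eqv_push_subst (Γ := Γ) (θ := θ) he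
    rwa [subst_sIter, subst_sIter] at this

/-! #### Rule (Add1 R2) -/

lemma GInv_add1R2 {Γ Δ : Finset Fm} {a b c : Tm}
    (h : GInv ⟨Γ, insert (.add1 (.s a) b (.s c)) Δ⟩) :
    GInv ⟨Γ, insert (.add1 a b c) Δ⟩ := by
  constructor
  · refine ⟨h.1.1, fun φ hφ => ?_⟩
    rcases Finset.mem_insert.mp hφ with rfl | hφ
    · exact ⟨a, b, c, rfl⟩
    · exact h.1.2 φ (Finset.mem_insert_of_mem hφ)
  · apply SEPP_transfer (S := ⟨Γ, insert (.add1 (.s a) b (.s c)) Δ⟩)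
      (S' := ⟨Γ, insert (.add1 a b c) Δ⟩) (fun v w hw => hw) ?_ ?_ h.2
    · rintro t (⟨b', c', hm⟩ | ⟨b', c', hm⟩ | rfl)
      · exact ⟨t, mem_Aset_add2 hm, dep_refl t⟩
      · rcases Finset.mem_insert.mp hm with he | hm'
        · injection he with e1 e2 e3
          subst e1
          exact ⟨Tm.s t, mem_Aset_add1 (Finset.mem_insert_self _ _), dep_s_right.mpr (dep_refl t)⟩
        · exact ⟨t, mem_Aset_add1 (Finset.mem_insert_of_mem hm'), dep_refl t⟩
      · exact ⟨Tm.zero, zero_mem_Aset _, dep_refl _⟩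
    · rintro u (⟨a', c', hm⟩ | ⟨a', b', hm⟩ | ⟨a', c', hm⟩ | ⟨a', b', hm⟩)
      · exact ⟨u, mem_BCset_add2b hm, dep_refl u⟩
      · exact ⟨u, mem_BCset_add2c hm, dep_refl u⟩
      · rcases Finset.mem_insert.mp hm with he | hm'
        · injection he with e1 e2 e3
          subst e2
          exact ⟨u, mem_BCset_add1b (Finset.mem_insert_self _ _), dep_refl u⟩
        · exact ⟨u, mem_BCset_add1b (Finset.mem_insert_of_mem hm'), dep_refl u⟩
      · rcases Finset.mem_insert.mp hm with he | hm'
        · injection he with e1 e2 e3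
          subst e3
          exact ⟨Tm.s u, mem_BCset_add1c (Finset.mem_insert_self _ _), dep_s_right.mpr (dep_refl u)⟩
        · exact ⟨u, mem_BCset_add1c (Finset.mem_insert_of_mem hm'), dep_refl u⟩

lemma IS_add1R2 {Γ Δ : Finset Fm} {a b c : Tm}
    (h : IndexSequent ⟨Γ, insert (.add1 (.s a) b (.s c)) Δ⟩) :
    IndexSequent ⟨Γ, insert (.add1 a b c) Δ⟩ := by
  apply IS_transfer (S := ⟨Γ, insert (.add1 (.s a) b (.s c)) Δ⟩)
    (S' := ⟨Γ, insert (.add1 a b c) Δ⟩) (fun v w hw => hw) ?_ ?_ h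
  · rintro b' ⟨a', c', hm⟩
    rcases Finset.mem_insert.mp hm with he | hm'
    · injection he with e1 e2 e3
      subst e2
      exact ⟨b', mem_B1_intro (Finset.mem_insert_self _ _), EqvTm.refl b'⟩
    · exact ⟨b', mem_B1_intro (Finset.mem_insert_of_mem hm'), EqvTm.refl b'⟩
  · rintro c' (⟨a', b', hm⟩ | ⟨a', b', hm⟩)
    · exact ⟨c', mem_Cset_ant hm, dep_refl c'⟩
    · rcases Finset.mem_insert.mp hm with he | hm'
      · injection he with e1 e2 e3
        subst e3
        exact ⟨Tm.s c', mem_Cset_suc (Finset.mem_insert_self _ _), dep_s_right.mpr (dep_refl c')⟩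
      · exact ⟨c', mem_Cset_suc (Finset.mem_insert_of_mem hm'), dep_refl c'⟩

lemma IVal_add1R2 {Γ Δ : Finset Fm} {a b c : Tm} {b₀ : Tm} {ι : ℤ}
    (h : IVal ⟨Γ, insert (.add1 a b c) Δ⟩ b₀ ι) :
    IVal ⟨Γ, insert (.add1 (.s a) b (.s c)) Δ⟩ b₀ ι := by
  apply IVal_transfer (S' := ⟨Γ, insert (.add1 a b c) Δ⟩)
    (S := ⟨Γ, insert (.add1 (.s a) b (.s c)) Δ⟩) (fun v w hw => hw) (EqvTm.refl b₀) ?_ h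
  intro a₁ b₁ c₁ hm
  rcases Finset.mem_insert.mp hm with he | hm'
  · injection he with e1 e2 e3
    subst e2
    exact ⟨Tm.s a, b₁, Tm.s c, Finset.mem_insert_self _ _, EqvTm.refl b₁⟩
  · exact ⟨a₁, b₁, c₁, Finset.mem_insert_of_mem hm', EqvTm.refl b₁⟩

/-! #### Rule (= L_a) -/

lemma image_eq_corr {Γ : Finset Fm} {θ θ' : ℕ → Tm} {a b : Tm}
    (hm : Fm.eq a b ∈ Γ.image (Fm.subst θ)) :
    ∃ P Q, Fm.eq P Q ∈ Γ ∧ a = P.subst θ ∧ b = Q.subst θ ∧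
      Fm.eq (P.subst θ') (Q.subst θ') ∈ Γ.image (Fm.subst θ') := by
  obtain ⟨ψ, hψ, he⟩ := Finset.mem_image.mp hm
  obtain ⟨P, Q, rfl, h1, h2⟩ := subst_eq_eqF he
  exact ⟨P, Q, hψ, h1, h2, by simpa [Fm.subst] using Finset.mem_image_of_mem (Fm.subst θ') hψ⟩

lemma image_add1_corr {Γ : Finset Fm} {θ θ' : ℕ → Tm} {a b c : Tm}
    (hm : Fm.add1 a b c ∈ Γ.image (Fm.subst θ)) :
    ∃ P Q R, Fm.add1 P Q R ∈ Γ ∧ a = P.subst θ ∧ b = Q.subst θ ∧ c = R.subst θ ∧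
      Fm.add1 (P.subst θ') (Q.subst θ') (R.subst θ') ∈ Γ.image (Fm.subst θ') := by
  obtain ⟨ψ, hψ, he⟩ := Finset.mem_image.mp hm
  obtain ⟨P, Q, R, rfl, h1, h2, h3⟩ := subst_eq_add1 he
  exact ⟨P, Q, R, hψ, h1, h2, h3,
    by simpa [Fm.subst] using Finset.mem_image_of_mem (Fm.subst θ') hψ⟩

lemma image_add2_corr {Γ : Finset Fm} {θ θ' : ℕ → Tm} {a b c : Tm}
    (hm : Fm.add2 a b c ∈ Γ.image (Fm.subst θ)) :
    ∃ P Q R, Fm.add2 P Q R ∈ Γ ∧ a = P.subst θ ∧ b = Q.subst θ ∧ c = R.subst θ ∧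
      Fm.add2 (P.subst θ') (Q.subst θ') (R.subst θ') ∈ Γ.image (Fm.subst θ') := by
  obtain ⟨ψ, hψ, he⟩ := Finset.mem_image.mp hm
  obtain ⟨P, Q, R, rfl, h1, h2, h3⟩ := subst_eq_add2 he
  exact ⟨P, Q, R, hψ, h1, h2, h3,
    by simpa [Fm.subst] using Finset.mem_image_of_mem (Fm.subst θ') hψ⟩

section EqLaRule

variable {Γ Δ : Finset Fm} {v1 v2 : ℕ} {t u : Tm}

lemma htu_mem :
    Fm.eq t u ∈ (antSet ⟨insert (Fm.eq t u) (Γ.image (Fm.subst (sub2 v1 v2 t u))),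
      Δ.image (Fm.subst (sub2 v1 v2 t u))⟩) := by
  simp [antSet]

lemma GInv_eqLa
    (h : GInv ⟨insert (Fm.eq t u) (Γ.image (Fm.subst (sub2 v1 v2 t u))),
               Δ.image (Fm.subst (sub2 v1 v2 t u))⟩) :
    GInv ⟨insert (Fm.eq t u) (Γ.image (Fm.subst (sub2 v1 v2 u t))),
          Δ.image (Fm.subst (sub2 v1 v2 u t))⟩ := by
  have htu := htu_mem (Γ := Γ) (Δ := Δ) (v1 := v1) (v2 := v2) (t := t) (u := u)
  constructor
  · constructor
    · intro φ hφ
      rcases Finset.mem_insert.mp hφ with rfl | hφ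
      · exact Or.inl ⟨t, u, rfl⟩
      · obtain ⟨ψ, hψ, rfl⟩ := Finset.mem_image.mp hφ
        have hc := h.1.1 (ψ.subst (sub2 v1 v2 t u))
          (Finset.mem_insert_of_mem (Finset.mem_image_of_mem _ hψ))
        rcases hc with ⟨p, q, he⟩ | ⟨a, b, c, he⟩
        · obtain ⟨P, Q, rfl, _, _⟩ := subst_eq_eqF he
          exact Or.inl ⟨_, _, rfl⟩
        · obtain ⟨P, Q, R, rfl, _, _, _⟩ := subst_eq_add2 he
          exact Or.inr ⟨_, _, _, rfl⟩
    · intro φ hφ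
      obtain ⟨ψ, hψ, rfl⟩ := Finset.mem_image.mp hφ
      obtain ⟨P, Q, R, rfl, _, _, _⟩ :=
        subst_eq_add1 (h.1.2 _ (Finset.mem_image_of_mem _ hψ)).choose_spec.choose_spec.choose_spec
      exact ⟨_, _, _, rfl⟩
  · refine SEPP_transfer
      (S := ⟨insert (Fm.eq t u) (Γ.image (Fm.subst (sub2 v1 v2 t u))),
             Δ.image (Fm.subst (sub2 v1 v2 t u))⟩)
      (S' := ⟨insert (Fm.eq t u) (Γ.image (Fm.subst (sub2 v1 v2 u t))),
              Δ.image (Fm.subst (sub2 v1 v2 u t))⟩)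
      (fun v w hw => eqv_eqLa hw) ?_ ?_ h.2
    · rintro t' (⟨B, C, hm⟩ | ⟨B, C, hm⟩ | rfl)
      · rcases Finset.mem_insert.mp hm with he | hm'
        · exact absurd he (by simp)
        · obtain ⟨P, Q, R, hPQR, rfl, _, _, hmem⟩ :=
            image_add2_corr (θ' := sub2 v1 v2 t u) hm'
          exact ⟨P.subst (sub2 v1 v2 t u),
            mem_Aset_add2 (Finset.mem_insert_of_mem hmem),
            dep_of_eqv (subst_swap htu P)⟩
      · obtain ⟨P, Q, R, hPQR, rfl, _, _, hmem⟩ :=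
          image_add1_corr (θ' := sub2 v1 v2 t u) hm
        exact ⟨P.subst (sub2 v1 v2 t u), mem_Aset_add1 hmem,
          dep_of_eqv (subst_swap htu P)⟩
      · exact ⟨Tm.zero, zero_mem_Aset _, dep_refl _⟩
    · rintro w (⟨A, C, hm⟩ | ⟨A, B, hm⟩ | ⟨A, C, hm⟩ | ⟨A, B, hm⟩)
      · rcases Finset.mem_insert.mp hm with he | hm'
        · exact absurd he (by simp)
        · obtain ⟨P, Q, R, hPQR, _, rfl, _, hmem⟩ :=
            image_add2_corr (θ' := sub2 v1 v2 t u) hm'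
          exact ⟨Q.subst (sub2 v1 v2 t u),
            mem_BCset_add2b (Finset.mem_insert_of_mem hmem),
            dep_of_eqv (subst_swap htu Q)⟩
      · rcases Finset.mem_insert.mp hm with he | hm'
        · exact absurd he (by simp)
        · obtain ⟨P, Q, R, hPQR, _, _, rfl, hmem⟩ :=
            image_add2_corr (θ' := sub2 v1 v2 t u) hm'
          exact ⟨R.subst (sub2 v1 v2 t u),
            mem_BCset_add2c (Finset.mem_insert_of_mem hmem),
            dep_of_eqv (subst_swap htu R)⟩
      · obtain ⟨P, Q, R, hPQR, _, rfl, _, hmem⟩ :=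
          image_add1_corr (θ' := sub2 v1 v2 t u) hm
        exact ⟨Q.subst (sub2 v1 v2 t u), mem_BCset_add1b hmem,
          dep_of_eqv (subst_swap htu Q)⟩
      · obtain ⟨P, Q, R, hPQR, _, _, rfl, hmem⟩ :=
          image_add1_corr (θ' := sub2 v1 v2 t u) hm
        exact ⟨R.subst (sub2 v1 v2 t u), mem_BCset_add1c hmem,
          dep_of_eqv (subst_swap htu R)⟩

lemma IS_eqLa
    (h : IndexSequent ⟨insert (Fm.eq t u) (Γ.image (Fm.subst (sub2 v1 v2 t u))),
               Δ.image (Fm.subst (sub2 v1 v2 t u))⟩) :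
    IndexSequent ⟨insert (Fm.eq t u) (Γ.image (Fm.subst (sub2 v1 v2 u t))),
          Δ.image (Fm.subst (sub2 v1 v2 u t))⟩ := by
  have htu := htu_mem (Γ := Γ) (Δ := Δ) (v1 := v1) (v2 := v2) (t := t) (u := u)
  refine IS_transfer
    (S := ⟨insert (Fm.eq t u) (Γ.image (Fm.subst (sub2 v1 v2 t u))),
           Δ.image (Fm.subst (sub2 v1 v2 t u))⟩)
    (S' := ⟨insert (Fm.eq t u) (Γ.image (Fm.subst (sub2 v1 v2 u t))),
            Δ.image (Fm.subst (sub2 v1 v2 u t))⟩)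
    (fun v w hw => eqv_eqLa hw) ?_ ?_ h
  · rintro b ⟨A, C, hm⟩
    obtain ⟨P, Q, R, hPQR, _, rfl, _, hmem⟩ :=
      image_add1_corr (θ' := sub2 v1 v2 t u) hm
    exact ⟨Q.subst (sub2 v1 v2 t u), mem_B1_intro hmem, subst_swap htu Q⟩
  · rintro c (⟨A, B, hm⟩ | ⟨A, B, hm⟩)
    · rcases Finset.mem_insert.mp hm with he | hm'
      · exact absurd he (by simp)
      · obtain ⟨P, Q, R, hPQR, _, _, rfl, hmem⟩ :=
          image_add2_corr (θ' := sub2 v1 v2 t u) hm'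
        exact ⟨R.subst (sub2 v1 v2 t u), mem_Cset_ant (Finset.mem_insert_of_mem hmem),
          dep_of_eqv (subst_swap htu R)⟩
    · obtain ⟨P, Q, R, hPQR, _, _, rfl, hmem⟩ :=
        image_add1_corr (θ' := sub2 v1 v2 t u) hm
      exact ⟨R.subst (sub2 v1 v2 t u), mem_Cset_suc hmem,
        dep_of_eqv (subst_swap htu R)⟩

lemma IVal_eqLa {F : Tm} {ι : ℤ}
    (h : IVal ⟨insert (Fm.eq t u) (Γ.image (Fm.subst (sub2 v1 v2 u t))),
          Δ.image (Fm.subst (sub2 v1 v2 u t))⟩ (F.subst (sub2 v1 v2 u t)) ι) :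
    IVal ⟨insert (Fm.eq t u) (Γ.image (Fm.subst (sub2 v1 v2 t u))),
          Δ.image (Fm.subst (sub2 v1 v2 t u))⟩ (F.subst (sub2 v1 v2 t u)) ι := by
  have htu := htu_mem (Γ := Γ) (Δ := Δ) (v1 := v1) (v2 := v2) (t := t) (u := u)
  refine IVal_transfer
    (S' := ⟨insert (Fm.eq t u) (Γ.image (Fm.subst (sub2 v1 v2 u t))),
            Δ.image (Fm.subst (sub2 v1 v2 u t))⟩)
    (S := ⟨insert (Fm.eq t u) (Γ.image (Fm.subst (sub2 v1 v2 t u))),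
           Δ.image (Fm.subst (sub2 v1 v2 t u))⟩)
    (fun v w hw => eqv_eqLa hw) (subst_swap htu F) ?_ h
  intro a₁ b₁ c₁ hm
  obtain ⟨P, Q, R, hPQR, _, rfl, _, hmem⟩ :=
    image_add1_corr (θ' := sub2 v1 v2 t u) hm
  exact ⟨P.subst (sub2 v1 v2 t u), Q.subst (sub2 v1 v2 t u), R.subst (sub2 v1 v2 t u),
    hmem, subst_swap htu Q⟩

end EqLaRule

/-! #### Rule (Case Add2): infrastructure -/

lemma notfv3_1 {w : ℕ} {A B C : Tm} {f : Tm → Tm → Tm → Fm}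
    (hf : ∀ A B C, (f A B C).fv = A.fv ∪ B.fv ∪ C.fv)
    (h : w ∉ (f A B C).fv) : w ∉ A.fv := by
  rw [hf] at h
  exact fun hx => h (Set.mem_union_left _ (Set.mem_union_left _ hx))

lemma notfv3_2 {w : ℕ} {A B C : Tm} {f : Tm → Tm → Tm → Fm}
    (hf : ∀ A B C, (f A B C).fv = A.fv ∪ B.fv ∪ C.fv)
    (h : w ∉ (f A B C).fv) : w ∉ B.fv := by
  rw [hf] at h
  exact fun hx => h (Set.mem_union_left _ (Set.mem_union_right _ hx))

lemma notfv3_3 {w : ℕ} {A B C : Tm} {f : Tm → Tm → Tm → Fm}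
    (hf : ∀ A B C, (f A B C).fv = A.fv ∪ B.fv ∪ C.fv)
    (h : w ∉ (f A B C).fv) : w ∉ C.fv := by
  rw [hf] at h
  exact fun hx => h (Set.mem_union_right _ hx)

lemma fv_add1' : ∀ A B C : Tm, (Fm.add1 A B C).fv = A.fv ∪ B.fv ∪ C.fv := fun _ _ _ => rfl

lemma fv_add2' : ∀ A B C : Tm, (Fm.add2 A B C).fv = A.fv ∪ B.fv ∪ C.fv := fun _ _ _ => rfl

lemma notfv_eq_1 {w : ℕ} {A B : Tm} (h : w ∉ (Fm.eq A B).fv) : w ∉ A.fv :=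
  fun hx => h (Set.mem_union_left _ hx)

lemma notfv_eq_2 {w : ℕ} {A B : Tm} (h : w ∉ (Fm.eq A B).fv) : w ∉ B.fv :=
  fun hx => h (Set.mem_union_right _ hx)

/-- The normalisation substitution for the right premise. -/
def Nr (y z : ℕ) (b c : Tm) : Tm → Tm :=
  Tm.subst (fun i => if i = y then b else if i = z then c else Tm.var i)

lemma Nr_s (y z : ℕ) (b c : Tm) (v : Tm) : Nr y z b c (.s v) = .s (Nr y z b c v) := rfl

lemma Nr_free {y z : ℕ} {b c v : Tm} (hy : y ∉ v.fv) (hz : z ∉ v.fv) :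
    Nr y z b c v = v := by
  apply subst_id_of_fv
  intro i hi
  have h1 : i ≠ y := fun e => hy (by rwa [e] at hi)
  have h2 : i ≠ z := fun e => hz (by rwa [e] at hi)
  rw [if_neg h1, if_neg h2]

lemma Nr_sIter (y z : ℕ) (b c : Tm) (n : ℕ) (v : Tm) :
    Nr y z b c (sIter n v) = sIter n (Nr y z b c v) := subst_sIter _ _ _

lemma Nr_vy (y z : ℕ) (b c : Tm) : Nr y z b c (.var y) = b := by
  simp [Nr, Tm.subst]

lemma Nr_vz {y z : ℕ} (hyz : y ≠ z) (b c : Tm) : Nr y z b c (.var z) = c := by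
  simp [Nr, Tm.subst, if_neg (Ne.symm hyz)]

lemma Gf_x0 {x : ℕ} {a : Tm} {N : Tm → Tm} : Gf x a N (.var x) = none := by
  simp [Gf]

lemma Gf_sx {x : ℕ} {a : Tm} {N : Tm → Tm} : Gf x a N (.s (.var x)) = some a := by
  simp [Gf]

lemma Gf_sIter_x {x : ℕ} {a : Tm} {N : Tm → Tm} (n : ℕ) :
    Gf x a N (sIter (n + 1) (.var x)) = some (sIter n a) := by
  induction n with
  | zero => exact Gf_sx
  | succ n ih =>
    show (match Gf x a N (sIter (n + 1) (.var x)) with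
      | none => some a
      | some p => some (Tm.s p)) = some (sIter (n + 1) a)
    rw [ih]
    rfl

lemma Gf_free {x y z : ℕ} {a b c v : Tm} (hx : x ∉ v.fv) (hy : y ∉ v.fv)
    (hz : z ∉ v.fv) : Gf x a (Nr y z b c) v = some v := by
  rw [Gf_of_not_fv (Nr_s y z b c) hx, Nr_free hy hz]

lemma Gf_free_sIter {x y z : ℕ} {a b c v : Tm} (hx : x ∉ v.fv) (hy : y ∉ v.fv)
    (hz : z ∉ v.fv) (n : ℕ) : Gf x a (Nr y z b c) (sIter n v) = some (sIter n v) := by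
  rw [Gf_free] <;> rw [fv_sIter] <;> assumption

lemma Rr_elim {A : Set Fm} {x : ℕ} {a : Tm} {N : Tm → Tm} {w w' : Tm} {p q : Tm}
    (h : Rr A x a N w w') (hw : Gf x a N w = some p) (hw' : Gf x a N w' = some q) :
    EqvTm A p q := by
  unfold Rr at h
  rw [hw, hw'] at h
  exact h

lemma Rr_elim_none {A : Set Fm} {x : ℕ} {a : Tm} {N : Tm → Tm} {w w' : Tm} {q : Tm}
    (h : Rr A x a N w w') (hw : Gf x a N w = none) (hw' : Gf x a N w' = some q) :
    False := by
  unfold Rr at h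
  rw [hw, hw'] at h
  exact h

lemma Rr_elim_intro {A : Set Fm} {x : ℕ} {a : Tm} {N : Tm → Tm} {w w' : Tm} {p q : Tm}
    (hw : Gf x a N w = some p) (hw' : Gf x a N w' = some q) (h : EqvTm A p q) :
    Rr A x a N w w' := by
  unfold Rr
  rw [hw, hw']
  exact h

section CaseAdd2

variable {Γ Δ : Finset Fm} {a b c : Tm} {x y z : ℕ}

/-- Main elimination lemma for the right premise of (Case Add2). -/
lemma caseR_main (hxy : x ≠ y) (hxz : x ≠ z) (hyz : y ≠ z)
    (hfr : ∀ ψ ∈ insert (Fm.add2 a b c) (Γ ∪ Δ), x ∉ ψ.fv ∧ y ∉ ψ.fv ∧ z ∉ ψ.fv) :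
    ∀ {w w'},
      EqvTm (antSet ⟨insert (Fm.eq a (.s (.var x))) (insert (Fm.eq b (.var y))
        (insert (Fm.eq c (.var z)) (insert (Fm.add2 (.var x) (.s (.var y)) (.var z)) Γ))), Δ⟩)
        w w' →
      Rr (antSet ⟨insert (Fm.add2 a b c) Γ, Δ⟩) x a (Nr y z b c) w w' := by
  have hP := hfr _ (Finset.mem_insert_self _ _)
  have hxa : x ∉ a.fv := notfv3_1 fv_add2' hP.1
  have hxb : x ∉ b.fv := notfv3_2 fv_add2' hP.1
  have hxc : x ∉ c.fv := notfv3_3 fv_add2' hP.1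
  have hya : y ∉ a.fv := notfv3_1 fv_add2' hP.2.1
  have hyb : y ∉ b.fv := notfv3_2 fv_add2' hP.2.1
  have hyc : y ∉ c.fv := notfv3_3 fv_add2' hP.2.1
  have hza : z ∉ a.fv := notfv3_1 fv_add2' hP.2.2
  have hzb : z ∉ b.fv := notfv3_2 fv_add2' hP.2.2
  have hzc : z ∉ c.fv := notfv3_3 fv_add2' hP.2.2
  apply eqv_to_Rr (Nr_s y z b c)
  intro p q hpq
  simp only [antSet_mk, Finset.coe_insert, Set.mem_insert_iff, Finset.mem_coe] at hpq
  rcases hpq with he | he | he | he | hΓ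
  · injection he with e1 e2
    rw [e1, e2]
    exact Rr_elim_intro (Gf_free hxa hya hza) Gf_sx (.refl _)
  · injection he with e1 e2
    rw [e1, e2]
    have hgy : Gf x a (Nr y z b c) (.var y) = some b := by
      rw [Gf_of_not_fv (Nr_s y z b c) (show x ∉ (Tm.var y).fv from by
        simp only [Tm.fv, Set.mem_singleton_iff]; exact hxy), Nr_vy]
    exact Rr_elim_intro (Gf_free hxb hyb hzb) hgy (.refl _)
  · injection he with e1 e2
    rw [e1, e2]
    have hgz : Gf x a (Nr y z b c) (.var z) = some c := by
      rw [Gf_of_not_fv (Nr_s y z b c) (show x ∉ (Tm.var z).fv from by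
        simp only [Tm.fv, Set.mem_singleton_iff]; exact hxz), Nr_vz hyz]
    exact Rr_elim_intro (Gf_free hxc hyc hzc) hgz (.refl _)
  · exact absurd he (by simp)
  · have hfrΓ := hfr _ (Finset.mem_insert_of_mem (Finset.mem_union_left _ hΓ))
    refine Rr_elim_intro
      (Gf_free (notfv_eq_1 hfrΓ.1) (notfv_eq_1 hfrΓ.2.1) (notfv_eq_1 hfrΓ.2.2))
      (Gf_free (notfv_eq_2 hfrΓ.1) (notfv_eq_2 hfrΓ.2.1) (notfv_eq_2 hfrΓ.2.2)) ?_
    apply EqvTm.base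
    simp only [antSet_mk, Finset.coe_insert, Set.mem_insert_iff, Finset.mem_coe]
    exact Or.inr hΓ

end CaseAdd2

/-! #### (Case Add2) left premise infrastructure -/

def N2 (y : ℕ) (b : Tm) : Tm → Tm := Tm.subst (fun i => if i = y then b else Tm.var i)

lemma N2_free {y : ℕ} {b v : Tm} (hy : y ∉ v.fv) : N2 y b v = v := by
  apply subst_id_of_fv
  intro i hi
  rw [if_neg (fun e => hy (by rwa [e] at hi))]

lemma N2_vy (y : ℕ) (b : Tm) : N2 y b (.var y) = b := by simp [N2, Tm.subst]

lemma sIter_s_shift (n : ℕ) (v : Tm) : sIter n (Tm.s v) = sIter (n + 1) v := by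
  rw [sIter_s]; rfl

section CaseAdd2b

variable {Γ Δ : Finset Fm} {a b c : Tm} {x y z : ℕ}

lemma caseL_push (hya : y ∉ a.fv) (hyb : y ∉ b.fv) (hyc : y ∉ c.fv)
    (hfrΓ : ∀ ψ ∈ Γ, y ∉ ψ.fv) :
    ∀ {v w}, EqvTm (antSet ⟨insert (Fm.eq a Tm.zero) (insert (Fm.eq b (.var y))
        (insert (Fm.eq c (.var y)) Γ)), Δ⟩) v w →
      EqvTm (insert (Fm.eq a Tm.zero) (insert (Fm.eq b c)
        (antSet ⟨insert (Fm.add2 a b c) Γ, Δ⟩))) (N2 y b v) (N2 y b w) := by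
  apply eqv_map
  intro p q hp
  simp only [antSet_mk, Finset.coe_insert, Set.mem_insert_iff, Finset.mem_coe] at hp
  show EqvTm _ (N2 y b p) (N2 y b q)
  rcases hp with he | he | he | hΓm
  · injection he with e1 e2
    rw [e1, e2, N2_free hya]
    have hz : N2 y b Tm.zero = Tm.zero := rfl
    rw [hz]
    exact EqvTm.base (Set.mem_insert _ _)
  · injection he with e1 e2
    rw [e1, e2, N2_free hyb, N2_vy]
    exact .refl _
  · injection he with e1 e2
    rw [e1, e2, N2_free hyc, N2_vy]
    exact (EqvTm.base (Set.mem_insert_of_mem _ (Set.mem_insert _ _))).symm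
  · have hfψ := hfrΓ _ hΓm
    rw [N2_free (notfv_eq_1 hfψ), N2_free (notfv_eq_2 hfψ)]
    apply EqvTm.base
    right; right
    simp only [antSet_mk, Finset.coe_insert, Set.mem_insert_iff, Finset.mem_coe]
    exact Or.inr hΓm

lemma hPQ_of_SEPP (h : SEPP ⟨insert (Fm.add2 a b c) Γ, Δ⟩) :
    ∀ v, InP (antSet ⟨insert (Fm.add2 a b c) Γ, Δ⟩) a v →
      InQ (antSet ⟨insert (Fm.add2 a b c) Γ, Δ⟩) b c v → False := by
  intro v hP hQ
  have hprinc : Fm.add2 a b c ∈ (⟨insert (Fm.add2 a b c) Γ, Δ⟩ : Seq).ant :=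
    Finset.mem_insert_self _ _
  have hbm := mem_BCset_add2b hprinc
  have hcm := mem_BCset_add2c hprinc
  have ham := mem_Aset_add2 hprinc
  have h0 := zero_mem_Aset (⟨insert (Fm.add2 a b c) Γ, Δ⟩ : Seq)
  rcases hP with hP | hP <;> rcases hQ with hQ | hQ
  · exact h a ham b hbm (dep_trans (dep_symm hP) hQ)
  · exact h a ham c hcm (dep_trans (dep_symm hP) hQ)
  · exact h _ h0 b hbm (dep_trans (dep_symm hP) hQ)
  · exact h _ h0 c hcm (dep_trans (dep_symm hP) hQ)

lemma caseL_main (hya : y ∉ a.fv) (hyb : y ∉ b.fv) (hyc : y ∉ c.fv)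
    (hfrΓ : ∀ ψ ∈ Γ, y ∉ ψ.fv) (hSE : SEPP ⟨insert (Fm.add2 a b c) Γ, Δ⟩)
    {v w : Tm} (h : EqvTm (antSet ⟨insert (Fm.eq a Tm.zero) (insert (Fm.eq b (.var y))
        (insert (Fm.eq c (.var y)) Γ)), Δ⟩) v w)
    (hv : y ∉ v.fv) (hw : y ∉ w.fv) :
    R2 (antSet ⟨insert (Fm.add2 a b c) Γ, Δ⟩) a b c v w := by
  have h2 := caseL_push hya hyb hyc hfrΓ h
  rw [N2_free hv, N2_free hw] at h2
  exact eqv_to_R2 (hPQ_of_SEPP hSE) h2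

/-! #### (Case Add2) membership decomposition -/

lemma SR_add2_cases {A B C : Tm}
    (hm : Fm.add2 A B C ∈ insert (Fm.eq a (.s (.var x))) (insert (Fm.eq b (.var y))
      (insert (Fm.eq c (.var z)) (insert (Fm.add2 (.var x) (.s (.var y)) (.var z)) Γ)))) :
    (A = .var x ∧ B = .s (.var y) ∧ C = .var z) ∨ Fm.add2 A B C ∈ Γ := by
  rcases Finset.mem_insert.mp hm with he | hm
  · exact absurd he (by simp)
  rcases Finset.mem_insert.mp hm with he | hm
  · exact absurd he (by simp)
  rcases Finset.mem_insert.mp hm with he | hm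
  · exact absurd he (by simp)
  rcases Finset.mem_insert.mp hm with he | hm
  · injection he with e1 e2 e3
    exact Or.inl ⟨e1, e2, e3⟩
  · exact Or.inr hm

lemma SL_add2_cases {A B C : Tm}
    (hm : Fm.add2 A B C ∈ insert (Fm.eq a Tm.zero) (insert (Fm.eq b (.var y))
      (insert (Fm.eq c (.var y)) Γ))) : Fm.add2 A B C ∈ Γ := by
  rcases Finset.mem_insert.mp hm with he | hm
  · exact absurd he (by simp)
  rcases Finset.mem_insert.mp hm with he | hm
  · exact absurd he (by simp)
  rcases Finset.mem_insert.mp hm with he | hm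
  · exact absurd he (by simp)
  · exact hm

lemma Gf_sIter_svy (hxy : x ≠ y) (m : ℕ) :
    Gf x a (Nr y z b c) (sIter m (.s (.var y))) = some (sIter (m + 1) b) := by
  rw [Gf_of_not_fv (Nr_s y z b c) (by
    rw [fv_sIter]
    show x ∉ (Tm.var y).fv
    simp only [Tm.fv, Set.mem_singleton_iff]
    exact hxy)]
  rw [Nr_sIter]
  rw [show Nr y z b c (.s (.var y)) = .s b from by rw [Nr_s, Nr_vy]]
  rw [sIter_s_shift]

lemma Gf_sIter_vz' (hxz : x ≠ z) (hyz : y ≠ z) (m : ℕ) :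
    Gf x a (Nr y z b c) (sIter m (.var z)) = some (sIter m c) := by
  rw [Gf_of_not_fv (Nr_s y z b c) (by
    rw [fv_sIter]
    show x ∉ (Tm.var z).fv
    simp only [Tm.fv, Set.mem_singleton_iff]
    exact hxz)]
  rw [Nr_sIter, Nr_vz hyz]

end CaseAdd2b

/-! #### (Case Add2) rule-level lemmas -/

section CaseAdd2c

variable {Γ Δ : Finset Fm} {a b c : Tm} {x y z : ℕ}

lemma hfrΓ_of (hfr : ∀ ψ ∈ insert (Fm.add2 a b c) (Γ ∪ Δ), x ∉ ψ.fv ∧ y ∉ ψ.fv ∧ z ∉ ψ.fv) :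
    ∀ ψ ∈ Γ, x ∉ ψ.fv ∧ y ∉ ψ.fv ∧ z ∉ ψ.fv :=
  fun ψ h => hfr ψ (Finset.mem_insert_of_mem (Finset.mem_union_left _ h))

lemma hfrΔ_of (hfr : ∀ ψ ∈ insert (Fm.add2 a b c) (Γ ∪ Δ), x ∉ ψ.fv ∧ y ∉ ψ.fv ∧ z ∉ ψ.fv) :
    ∀ ψ ∈ Δ, x ∉ ψ.fv ∧ y ∉ ψ.fv ∧ z ∉ ψ.fv :=
  fun ψ h => hfr ψ (Finset.mem_insert_of_mem (Finset.mem_union_right _ h))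

lemma GInv_caseR (hxy : x ≠ y) (hxz : x ≠ z) (hyz : y ≠ z)
    (hfr : ∀ ψ ∈ insert (Fm.add2 a b c) (Γ ∪ Δ), x ∉ ψ.fv ∧ y ∉ ψ.fv ∧ z ∉ ψ.fv)
    (h : GInv ⟨insert (Fm.add2 a b c) Γ, Δ⟩) :
    GInv ⟨insert (Fm.eq a (.s (.var x))) (insert (Fm.eq b (.var y))
      (insert (Fm.eq c (.var z)) (insert (Fm.add2 (.var x) (.s (.var y)) (.var z)) Γ))), Δ⟩ := by
  have hfrΓ := hfrΓ_of hfr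
  have hfrΔ := hfrΔ_of hfr
  constructor
  · constructor
    · intro φ hφ
      rcases Finset.mem_insert.mp hφ with rfl | hφ
      · exact Or.inl ⟨_, _, rfl⟩
      rcases Finset.mem_insert.mp hφ with rfl | hφ
      · exact Or.inl ⟨_, _, rfl⟩
      rcases Finset.mem_insert.mp hφ with rfl | hφ
      · exact Or.inl ⟨_, _, rfl⟩
      rcases Finset.mem_insert.mp hφ with rfl | hφ
      · exact Or.inr ⟨_, _, _, rfl⟩
      · exact h.1.1 φ (Finset.mem_insert_of_mem hφ)
    · exact h.1.2
  · intro t ht u hu hd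
    obtain ⟨n, m, he⟩ := hd
    have hR := caseR_main hxy hxz hyz hfr he
    have HU : ∃ u₀ m', u₀ ∈ BCset (⟨insert (Fm.add2 a b c) Γ, Δ⟩ : Seq) ∧
        Gf x a (Nr y z b c) (sIter m u) = some (sIter m' u₀) := by
      rcases hu with ⟨A, C, hm⟩ | ⟨A, B, hm⟩ | ⟨A, C, hm⟩ | ⟨A, B, hm⟩
      · rcases SR_add2_cases hm with ⟨e1, e2, e3⟩ | hmΓ
        · subst e2
          exact ⟨b, m + 1, mem_BCset_add2b (Finset.mem_insert_self _ _), Gf_sIter_svy hxy m⟩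
        · have hf := hfrΓ _ hmΓ
          exact ⟨u, m, mem_BCset_add2b (Finset.mem_insert_of_mem hmΓ),
            Gf_free_sIter (notfv3_2 fv_add2' hf.1) (notfv3_2 fv_add2' hf.2.1)
              (notfv3_2 fv_add2' hf.2.2) m⟩
      · rcases SR_add2_cases hm with ⟨e1, e2, e3⟩ | hmΓ
        · subst e3
          exact ⟨c, m, mem_BCset_add2c (Finset.mem_insert_self _ _), Gf_sIter_vz' hxz hyz m⟩
        · have hf := hfrΓ _ hmΓ
          exact ⟨u, m, mem_BCset_add2c (Finset.mem_insert_of_mem hmΓ),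
            Gf_free_sIter (notfv3_3 fv_add2' hf.1) (notfv3_3 fv_add2' hf.2.1)
              (notfv3_3 fv_add2' hf.2.2) m⟩
      · have hf := hfrΔ _ hm
        exact ⟨u, m, mem_BCset_add1b hm,
          Gf_free_sIter (notfv3_2 fv_add1' hf.1) (notfv3_2 fv_add1' hf.2.1)
            (notfv3_2 fv_add1' hf.2.2) m⟩
      · have hf := hfrΔ _ hm
        exact ⟨u, m, mem_BCset_add1c hm,
          Gf_free_sIter (notfv3_3 fv_add1' hf.1) (notfv3_3 fv_add1' hf.2.1)
            (notfv3_3 fv_add1' hf.2.2) m⟩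
    obtain ⟨u₀, m', hu₀, hGu⟩ := HU
    have HT : (∃ t₀ n', t₀ ∈ Aset (⟨insert (Fm.add2 a b c) Γ, Δ⟩ : Seq) ∧
        Gf x a (Nr y z b c) (sIter n t) = some (sIter n' t₀)) ∨
        Gf x a (Nr y z b c) (sIter n t) = none := by
      rcases ht with ⟨B, C, hm⟩ | ⟨B, C, hm⟩ | rfl
      · rcases SR_add2_cases hm with ⟨e1, e2, e3⟩ | hmΓ
        · subst e1
          cases n with
          | zero => exact Or.inr Gf_x0
          | succ k =>
            exact Or.inl ⟨a, k, mem_Aset_add2 (Finset.mem_insert_self _ _), Gf_sIter_x k⟩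
        · have hf := hfrΓ _ hmΓ
          exact Or.inl ⟨t, n, mem_Aset_add2 (Finset.mem_insert_of_mem hmΓ),
            Gf_free_sIter (notfv3_1 fv_add2' hf.1) (notfv3_1 fv_add2' hf.2.1)
              (notfv3_1 fv_add2' hf.2.2) n⟩
      · have hf := hfrΔ _ hm
        exact Or.inl ⟨t, n, mem_Aset_add1 hm,
          Gf_free_sIter (notfv3_1 fv_add1' hf.1) (notfv3_1 fv_add1' hf.2.1)
            (notfv3_1 fv_add1' hf.2.2) n⟩
      · exact Or.inl ⟨Tm.zero, n, zero_mem_Aset _,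
          Gf_free_sIter (by simp [Tm.fv]) (by simp [Tm.fv]) (by simp [Tm.fv]) n⟩
    rcases HT with ⟨t₀, n', ht₀, hGt⟩ | hGt
    · exact h.2 t₀ ht₀ u₀ hu₀ ⟨n', m', Rr_elim hR hGt hGu⟩
    · exact Rr_elim_none hR hGt hGu

lemma IS_caseR (hxy : x ≠ y) (hxz : x ≠ z) (hyz : y ≠ z)
    (hfr : ∀ ψ ∈ insert (Fm.add2 a b c) (Γ ∪ Δ), x ∉ ψ.fv ∧ y ∉ ψ.fv ∧ z ∉ ψ.fv)
    (hIS : IndexSequent ⟨insert (Fm.add2 a b c) Γ, Δ⟩) :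
    IndexSequent ⟨insert (Fm.eq a (.s (.var x))) (insert (Fm.eq b (.var y))
      (insert (Fm.eq c (.var z)) (insert (Fm.add2 (.var x) (.s (.var y)) (.var z)) Γ))), Δ⟩ := by
  have hfrΓ := hfrΓ_of hfr
  have hfrΔ := hfrΔ_of hfr
  constructor
  · rintro t ⟨A, C, hm⟩ u hu hd
    obtain ⟨n, m, he⟩ := hd
    have hR := caseR_main hxy hxz hyz hfr he
    have hf := hfrΔ _ hm
    have hGt := Gf_free_sIter (a := a) (b := b) (c := c) (notfv3_2 fv_add1' hf.1) (notfv3_2 fv_add1' hf.2.1)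
      (notfv3_2 fv_add1' hf.2.2) n
    rcases hu with ⟨A', B', hm'⟩ | ⟨A', B', hm'⟩
    · rcases SR_add2_cases hm' with ⟨e1, e2, e3⟩ | hmΓ
      · subst e3
        exact hIS.1 t (mem_B1_intro hm) c (mem_Cset_ant (Finset.mem_insert_self _ _))
          ⟨n, m, Rr_elim hR hGt (Gf_sIter_vz' hxz hyz m)⟩
      · have hf' := hfrΓ _ hmΓ
        exact hIS.1 t (mem_B1_intro hm) u (mem_Cset_ant (Finset.mem_insert_of_mem hmΓ))
          ⟨n, m, Rr_elim hR hGt (Gf_free_sIter (notfv3_3 fv_add2' hf'.1)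
            (notfv3_3 fv_add2' hf'.2.1) (notfv3_3 fv_add2' hf'.2.2) m)⟩
    · have hf' := hfrΔ _ hm'
      exact hIS.1 t (mem_B1_intro hm) u (mem_Cset_suc hm')
        ⟨n, m, Rr_elim hR hGt (Gf_free_sIter (notfv3_3 fv_add1' hf'.1)
          (notfv3_3 fv_add1' hf'.2.1) (notfv3_3 fv_add1' hf'.2.2) m)⟩
  · rintro b₁ ⟨A, C, hm⟩ b₂ ⟨A', C', hm'⟩ n m he
    have hR := caseR_main hxy hxz hyz hfr he
    have hf := hfrΔ _ hm
    have hf' := hfrΔ _ hm'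
    apply hIS.2 b₁ (mem_B1_intro hm) b₂ (mem_B1_intro hm') n m
    exact Rr_elim hR
      (Gf_free_sIter (notfv3_2 fv_add1' hf.1) (notfv3_2 fv_add1' hf.2.1)
        (notfv3_2 fv_add1' hf.2.2) n)
      (Gf_free_sIter (notfv3_2 fv_add1' hf'.1) (notfv3_2 fv_add1' hf'.2.1)
        (notfv3_2 fv_add1' hf'.2.2) m)

lemma IVal_caseR_nonprog (hxy : x ≠ y) (hxz : x ≠ z) (hyz : y ≠ z)
    (hfr : ∀ ψ ∈ insert (Fm.add2 a b c) (Γ ∪ Δ), x ∉ ψ.fv ∧ y ∉ ψ.fv ∧ z ∉ ψ.fv)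
    {b₀ : Tm} (hb₀x : x ∉ b₀.fv) (hb₀y : y ∉ b₀.fv) (hb₀z : z ∉ b₀.fv) {ι : ℤ}
    (h : IVal ⟨insert (Fm.eq a (.s (.var x))) (insert (Fm.eq b (.var y))
      (insert (Fm.eq c (.var z)) (insert (Fm.add2 (.var x) (.s (.var y)) (.var z)) Γ))), Δ⟩
      b₀ ι) :
    IVal ⟨insert (Fm.add2 a b c) Γ, Δ⟩ b₀ ι := by
  obtain ⟨A, B, C, hm, n, m, he, hv⟩ := h
  have hR := caseR_main hxy hxz hyz hfr he
  have hf := hfrΔ_of hfr _ hm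
  exact ⟨A, B, C, hm, n, m, Rr_elim hR (Gf_free_sIter hb₀x hb₀y hb₀z n)
    (Gf_free_sIter (notfv3_2 fv_add1' hf.1) (notfv3_2 fv_add1' hf.2.1)
      (notfv3_2 fv_add1' hf.2.2) m), hv⟩

lemma IVal_caseR_prog (hxy : x ≠ y) (hxz : x ≠ z) (hyz : y ≠ z)
    (hfr : ∀ ψ ∈ insert (Fm.add2 a b c) (Γ ∪ Δ), x ∉ ψ.fv ∧ y ∉ ψ.fv ∧ z ∉ ψ.fv)
    {ι : ℤ}
    (h : IVal ⟨insert (Fm.eq a (.s (.var x))) (insert (Fm.eq b (.var y))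
      (insert (Fm.eq c (.var z)) (insert (Fm.add2 (.var x) (.s (.var y)) (.var z)) Γ))), Δ⟩
      (.s (.var y)) ι) :
    IVal ⟨insert (Fm.add2 a b c) Γ, Δ⟩ b (ι - 1) := by
  obtain ⟨A, B, C, hm, n, m, he, hv⟩ := h
  have hR := caseR_main hxy hxz hyz hfr he
  have hf := hfrΔ_of hfr _ hm
  refine ⟨A, B, C, hm, n + 1, m, Rr_elim hR (Gf_sIter_svy hxy n)
    (Gf_free_sIter (notfv3_2 fv_add1' hf.1) (notfv3_2 fv_add1' hf.2.1)
      (notfv3_2 fv_add1' hf.2.2) m), ?_⟩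
  rw [hv]
  push_cast
  ring

lemma GInv_caseL
    (hfr : ∀ ψ ∈ insert (Fm.add2 a b c) (Γ ∪ Δ), x ∉ ψ.fv ∧ y ∉ ψ.fv ∧ z ∉ ψ.fv)
    (h : GInv ⟨insert (Fm.add2 a b c) Γ, Δ⟩) :
    GInv ⟨insert (Fm.eq a Tm.zero) (insert (Fm.eq b (.var y))
      (insert (Fm.eq c (.var y)) Γ)), Δ⟩ := by
  have hP := hfr _ (Finset.mem_insert_self _ _)
  have hya : y ∉ a.fv := notfv3_1 fv_add2' hP.2.1
  have hyb : y ∉ b.fv := notfv3_2 fv_add2' hP.2.1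
  have hyc : y ∉ c.fv := notfv3_3 fv_add2' hP.2.1
  have hfrΓy : ∀ ψ ∈ Γ, y ∉ ψ.fv := fun ψ hψ => (hfrΓ_of hfr ψ hψ).2.1
  have hfrΔy : ∀ ψ ∈ Δ, y ∉ ψ.fv := fun ψ hψ => (hfrΔ_of hfr ψ hψ).2.1
  have hprinc : Fm.add2 a b c ∈ (⟨insert (Fm.add2 a b c) Γ, Δ⟩ : Seq).ant :=
    Finset.mem_insert_self _ _
  constructor
  · constructor
    · intro φ hφ
      rcases Finset.mem_insert.mp hφ with rfl | hφ
      · exact Or.inl ⟨_, _, rfl⟩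
      rcases Finset.mem_insert.mp hφ with rfl | hφ
      · exact Or.inl ⟨_, _, rfl⟩
      rcases Finset.mem_insert.mp hφ with rfl | hφ
      · exact Or.inl ⟨_, _, rfl⟩
      · exact h.1.1 φ (Finset.mem_insert_of_mem hφ)
    · exact h.1.2
  · intro t ht u hu hd
    obtain ⟨n, m, he⟩ := hd
    have HT : t ∈ Aset (⟨insert (Fm.add2 a b c) Γ, Δ⟩ : Seq) ∧ y ∉ t.fv := by
      rcases ht with ⟨B, C, hm⟩ | ⟨B, C, hm⟩ | rfl
      · have hmΓ := SL_add2_cases hm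
        exact ⟨mem_Aset_add2 (Finset.mem_insert_of_mem hmΓ),
          notfv3_1 fv_add2' (hfrΓy _ hmΓ)⟩
      · exact ⟨mem_Aset_add1 hm, notfv3_1 fv_add1' (hfrΔy _ hm)⟩
      · exact ⟨zero_mem_Aset _, by simp [Tm.fv]⟩
    have HU : u ∈ BCset (⟨insert (Fm.add2 a b c) Γ, Δ⟩ : Seq) ∧ y ∉ u.fv := by
      rcases hu with ⟨A, C, hm⟩ | ⟨A, B, hm⟩ | ⟨A, C, hm⟩ | ⟨A, B, hm⟩
      · have hmΓ := SL_add2_cases hm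
        exact ⟨mem_BCset_add2b (Finset.mem_insert_of_mem hmΓ),
          notfv3_2 fv_add2' (hfrΓy _ hmΓ)⟩
      · have hmΓ := SL_add2_cases hm
        exact ⟨mem_BCset_add2c (Finset.mem_insert_of_mem hmΓ),
          notfv3_3 fv_add2' (hfrΓy _ hmΓ)⟩
      · exact ⟨mem_BCset_add1b hm, notfv3_2 fv_add1' (hfrΔy _ hm)⟩
      · exact ⟨mem_BCset_add1c hm, notfv3_3 fv_add1' (hfrΔy _ hm)⟩
    have hRm := caseL_main hya hyb hyc hfrΓy h.2 he
      (by rw [fv_sIter]; exact HT.2) (by rw [fv_sIter]; exact HU.2)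
    rcases hRm with hE | ⟨hPl, hPr⟩ | ⟨hQl, hQr⟩
    · exact h.2 t HT.1 u HU.1 ⟨n, m, hE⟩
    · rcases (InP_sIter m).mp hPr with hD | hD
      · exact h.2 a (mem_Aset_add2 hprinc) u HU.1 (dep_symm hD)
      · exact h.2 Tm.zero (zero_mem_Aset _) u HU.1 (dep_symm hD)
    · rcases (InQ_sIter n).mp hQl with hD | hD
      · exact h.2 t HT.1 b (mem_BCset_add2b hprinc) hD
      · exact h.2 t HT.1 c (mem_BCset_add2c hprinc) hD

lemma IS_caseL
    (hfr : ∀ ψ ∈ insert (Fm.add2 a b c) (Γ ∪ Δ), x ∉ ψ.fv ∧ y ∉ ψ.fv ∧ z ∉ ψ.fv)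
    (hSE : SEPP ⟨insert (Fm.add2 a b c) Γ, Δ⟩)
    (hIS : IndexSequent ⟨insert (Fm.add2 a b c) Γ, Δ⟩)
    (hIB : ∀ a' b' c', Fm.add1 a' b' c' ∈ Δ →
      ¬ DepTm (antSet ⟨insert (Fm.add2 a b c) Γ, Δ⟩) b b') :
    IndexSequent ⟨insert (Fm.eq a Tm.zero) (insert (Fm.eq b (.var y))
      (insert (Fm.eq c (.var y)) Γ)), Δ⟩ := by
  have hP := hfr _ (Finset.mem_insert_self _ _)
  have hya : y ∉ a.fv := notfv3_1 fv_add2' hP.2.1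
  have hyb : y ∉ b.fv := notfv3_2 fv_add2' hP.2.1
  have hyc : y ∉ c.fv := notfv3_3 fv_add2' hP.2.1
  have hfrΓy : ∀ ψ ∈ Γ, y ∉ ψ.fv := fun ψ hψ => (hfrΓ_of hfr ψ hψ).2.1
  have hfrΔy : ∀ ψ ∈ Δ, y ∉ ψ.fv := fun ψ hψ => (hfrΔ_of hfr ψ hψ).2.1
  have hprinc : Fm.add2 a b c ∈ (⟨insert (Fm.add2 a b c) Γ, Δ⟩ : Seq).ant :=
    Finset.mem_insert_self _ _
  constructor
  · rintro b₁ ⟨A, C, hm⟩ u hu hd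
    obtain ⟨n, m, he⟩ := hd
    have HU : u ∈ Cset (⟨insert (Fm.add2 a b c) Γ, Δ⟩ : Seq) ∧ y ∉ u.fv := by
      rcases hu with ⟨A', B', hm'⟩ | ⟨A', B', hm'⟩
      · have hmΓ := SL_add2_cases hm'
        exact ⟨mem_Cset_ant (Finset.mem_insert_of_mem hmΓ),
          notfv3_3 fv_add2' (hfrΓy _ hmΓ)⟩
      · exact ⟨mem_Cset_suc hm', notfv3_3 fv_add1' (hfrΔy _ hm')⟩
    have hRm := caseL_main hya hyb hyc hfrΓy hSE he
      (by rw [fv_sIter]; exact notfv3_2 fv_add1' (hfrΔy _ hm))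
      (by rw [fv_sIter]; exact HU.2)
    rcases hRm with hE | ⟨hPl, hPr⟩ | ⟨hQl, hQr⟩
    · exact hIS.1 b₁ (mem_B1_intro hm) u HU.1 ⟨n, m, hE⟩
    · rcases (InP_sIter n).mp hPl with hD | hD
      · exact hSE a (mem_Aset_add2 hprinc) b₁ (mem_BCset_add1b hm) (dep_symm hD)
      · exact hSE Tm.zero (zero_mem_Aset _) b₁ (mem_BCset_add1b hm) (dep_symm hD)
    · rcases (InQ_sIter n).mp hQl with hD | hD
      · exact hIB _ _ _ hm (dep_symm hD)
      · exact hIS.1 b₁ (mem_B1_intro hm) c (mem_Cset_ant hprinc) hD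
  · rintro b₁ ⟨A, C, hm⟩ b₂ ⟨A', C', hm'⟩ n m he
    have hRm := caseL_main hya hyb hyc hfrΓy hSE he
      (by rw [fv_sIter]; exact notfv3_2 fv_add1' (hfrΔy _ hm))
      (by rw [fv_sIter]; exact notfv3_2 fv_add1' (hfrΔy _ hm'))
    rcases hRm with hE | ⟨hPl, hPr⟩ | ⟨hQl, hQr⟩
    · exact hIS.2 b₁ (mem_B1_intro hm) b₂ (mem_B1_intro hm') n m hE
    · rcases (InP_sIter n).mp hPl with hD | hD
      · exact absurd (dep_symm hD)
          (hSE a (mem_Aset_add2 hprinc) b₁ (mem_BCset_add1b hm))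
      · exact absurd (dep_symm hD)
          (hSE Tm.zero (zero_mem_Aset _) b₁ (mem_BCset_add1b hm))
    · rcases (InQ_sIter n).mp hQl with hD | hD
      · exact absurd (dep_symm hD) (hIB _ _ _ hm)
      · exact absurd hD (hIS.1 b₁ (mem_B1_intro hm) c (mem_Cset_ant hprinc))

lemma IVal_caseL_nonprog
    (hfr : ∀ ψ ∈ insert (Fm.add2 a b c) (Γ ∪ Δ), x ∉ ψ.fv ∧ y ∉ ψ.fv ∧ z ∉ ψ.fv)
    (hSE : SEPP ⟨insert (Fm.add2 a b c) Γ, Δ⟩)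
    (hIS : IndexSequent ⟨insert (Fm.add2 a b c) Γ, Δ⟩)
    (hIB : ∀ a' b' c', Fm.add1 a' b' c' ∈ Δ →
      ¬ DepTm (antSet ⟨insert (Fm.add2 a b c) Γ, Δ⟩) b b')
    {b₀ : Tm} (hb₀y : y ∉ b₀.fv)
    (hb₀BC : b₀ ∈ BCset (⟨insert (Fm.add2 a b c) Γ, Δ⟩ : Seq)) {ι : ℤ}
    (h : IVal ⟨insert (Fm.eq a Tm.zero) (insert (Fm.eq b (.var y))
      (insert (Fm.eq c (.var y)) Γ)), Δ⟩ b₀ ι) :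
    IVal ⟨insert (Fm.add2 a b c) Γ, Δ⟩ b₀ ι := by
  have hP := hfr _ (Finset.mem_insert_self _ _)
  have hya : y ∉ a.fv := notfv3_1 fv_add2' hP.2.1
  have hyb : y ∉ b.fv := notfv3_2 fv_add2' hP.2.1
  have hyc : y ∉ c.fv := notfv3_3 fv_add2' hP.2.1
  have hfrΓy : ∀ ψ ∈ Γ, y ∉ ψ.fv := fun ψ hψ => (hfrΓ_of hfr ψ hψ).2.1
  have hfrΔy : ∀ ψ ∈ Δ, y ∉ ψ.fv := fun ψ hψ => (hfrΔ_of hfr ψ hψ).2.1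
  have hprinc : Fm.add2 a b c ∈ (⟨insert (Fm.add2 a b c) Γ, Δ⟩ : Seq).ant :=
    Finset.mem_insert_self _ _
  obtain ⟨A, B, C, hm, n, m, he, hv⟩ := h
  have hRm := caseL_main hya hyb hyc hfrΓy hSE he
    (by rw [fv_sIter]; exact hb₀y)
    (by rw [fv_sIter]; exact notfv3_2 fv_add1' (hfrΔy _ hm))
  rcases hRm with hE | ⟨hPl, hPr⟩ | ⟨hQl, hQr⟩
  · exact ⟨A, B, C, hm, n, m, hE, hv⟩
  · rcases (InP_sIter n).mp hPl with hD | hD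
    · exact absurd (dep_symm hD) (hSE a (mem_Aset_add2 hprinc) b₀ hb₀BC)
    · exact absurd (dep_symm hD) (hSE Tm.zero (zero_mem_Aset _) b₀ hb₀BC)
  · rcases (InQ_sIter m).mp hQr with hD | hD
    · exact absurd (dep_symm hD) (hIB _ _ _ hm)
    · exact absurd hD (hIS.1 B (mem_B1_intro hm) c (mem_Cset_ant hprinc))

end CaseAdd2c

/-! #### Root sequent facts -/

lemma GInv_goalSeq : GInv goalSeq := by
  constructor
  · constructor
    · intro φ hφ
      rw [show goalSeq.ant = {Fm.add2 (Tm.var 0) (Tm.var 1) (Tm.var 2)} from rfl,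
        Finset.mem_singleton] at hφ
      subst hφ
      exact Or.inr ⟨_, _, _, rfl⟩
    · intro φ hφ
      rw [show goalSeq.suc = {Fm.add1 (Tm.var 0) (Tm.var 1) (Tm.var 2)} from rfl,
        Finset.mem_singleton] at hφ
      subst hφ
      exact ⟨_, _, _, rfl⟩
  · intro t ht u hu hd
    obtain ⟨n, m, he⟩ := hd
    have heq := eqv_no_eq (A := antSet goalSeq) (fun p q hpq => by
      rw [show antSet goalSeq = ↑({Fm.add2 (Tm.var 0) (Tm.var 1) (Tm.var 2)} : Finset Fm)
        from rfl] at hpq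
      simp at hpq) he
    have ht' : t = Tm.var 0 ∨ t = Tm.zero := by
      rcases ht with ⟨b', c', hm⟩ | ⟨b', c', hm⟩ | rfl
      · rw [show goalSeq.ant = {Fm.add2 (Tm.var 0) (Tm.var 1) (Tm.var 2)} from rfl,
          Finset.mem_singleton] at hm
        injection hm with e1 e2 e3
        exact Or.inl e1
      · rw [show goalSeq.suc = {Fm.add1 (Tm.var 0) (Tm.var 1) (Tm.var 2)} from rfl,
          Finset.mem_singleton] at hm
        injection hm with e1 e2 e3
        exact Or.inl e1
      · exact Or.inr rfl
    have hu' : u = Tm.var 1 ∨ u = Tm.var 2 := by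
      rcases hu with ⟨a', c', hm⟩ | ⟨a', b', hm⟩ | ⟨a', c', hm⟩ | ⟨a', b', hm⟩ <;>
        first
        | (rw [show goalSeq.ant = {Fm.add2 (Tm.var 0) (Tm.var 1) (Tm.var 2)} from rfl,
            Finset.mem_singleton] at hm
           injection hm with e1 e2 e3
           first | exact Or.inl e2 | exact Or.inr e3)
        | (rw [show goalSeq.suc = {Fm.add1 (Tm.var 0) (Tm.var 1) (Tm.var 2)} from rfl,
            Finset.mem_singleton] at hm
           injection hm with e1 e2 e3
           first | exact Or.inl e2 | exact Or.inr e3)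
    rcases ht' with rfl | rfl <;> rcases hu' with rfl | rfl
    · exact absurd (sIter_var_inj heq).2 (by omega)
    · exact absurd (sIter_var_inj heq).2 (by omega)
    · exact sIter_var_ne_zero heq.symm
    · exact sIter_var_ne_zero heq.symm

/-! #### The traced second argument -/

def snd2 : Fm → Tm
  | .add2 _ b _ => b
  | .add1 _ b _ => b
  | _ => Tm.zero

/-! #### Step lemmas over `Inf` -/

lemma GInv_step {S : Seq} {r : Rule} {prems : List Seq} (hinf : Inf r S prems)
    (hcut : ∀ φ, r ≠ Rule.cut φ) (heqL : ∀ v1 v2 t u, r ≠ Rule.eqL v1 v2 t u)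
    (hG : GInv S) : ∀ S' ∈ prems, GInv S' := by
  cases hinf with
  | ax _ => simp
  | weak hΓ hΔ =>
    intro S' hS'
    rw [List.mem_singleton] at hS'
    subst hS'
    exact GInv_weak hΓ hΔ hG
  | cut => exact absurd rfl (hcut _)
  | subst =>
    intro S' hS'
    rw [List.mem_singleton] at hS'
    subst hS'
    exact GInv_subst hG
  | negL => exact absurd (hG.1.1 _ (Finset.mem_insert_self _ _)) (by simp [shapeL])
  | negR => exact absurd (hG.1.2 _ (Finset.mem_insert_self _ _)) (by simp [shapeR])
  | andL => exact absurd (hG.1.1 _ (Finset.mem_insert_self _ _)) (by simp [shapeL])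
  | andR => exact absurd (hG.1.2 _ (Finset.mem_insert_self _ _)) (by simp [shapeR])
  | orL => exact absurd (hG.1.1 _ (Finset.mem_insert_self _ _)) (by simp [shapeL])
  | orR => exact absurd (hG.1.2 _ (Finset.mem_insert_self _ _)) (by simp [shapeR])
  | impL => exact absurd (hG.1.1 _ (Finset.mem_insert_self _ _)) (by simp [shapeL])
  | impR => exact absurd (hG.1.2 _ (Finset.mem_insert_self _ _)) (by simp [shapeR])
  | allL => exact absurd (hG.1.1 _ (Finset.mem_insert_self _ _)) (by simp [shapeL])
  | allR _ => exact absurd (hG.1.2 _ (Finset.mem_insert_self _ _)) (by simp [shapeR])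
  | exL _ => exact absurd (hG.1.1 _ (Finset.mem_insert_self _ _)) (by simp [shapeL])
  | exR => exact absurd (hG.1.2 _ (Finset.mem_insert_self _ _)) (by simp [shapeR])
  | eqR => exact absurd (hG.1.2 _ (Finset.mem_insert_self _ _)) (by simp [shapeR])
  | eqL => exact absurd rfl (heqL _ _ _ _)
  | eqLa =>
    intro S' hS'
    rw [List.mem_singleton] at hS'
    subst hS'
    exact GInv_eqLa hG
  | add1R1 => simp
  | add1R2 =>
    intro S' hS'
    rw [List.mem_singleton] at hS'
    subst hS'
    exact GInv_add1R2 hG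
  | add2R1 => simp
  | add2R2 => exact absurd (hG.1.2 _ (Finset.mem_insert_self _ _)) (by simp [shapeR])
  | caseAdd1 h1 h2 h3 h4 =>
    exact absurd (hG.1.1 _ (Finset.mem_insert_self _ _)) (by simp [shapeL])
  | caseAdd2 h1 h2 h3 h4 =>
    intro S' hS'
    rcases List.mem_pair.mp hS' with rfl | rfl
    · exact GInv_caseL h4 hG
    · exact GInv_caseR h1 h2 h3 h4 hG

lemma D_GInv {P : PreProof} (hP : IsCNProofOfGoal P) :
    ∀ σ S r, P.D.label σ = some (S, r) → GInv S := by
  obtain ⟨hproof, hcf, hneql, hcn, r₀, hr₀⟩ := hP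
  intro σ
  induction σ using List.reverseRecOn with
  | nil =>
    intro S r h
    rw [hr₀] at h
    injection h with h'
    injection h' with h1 h2
    rw [← h1]
    exact GInv_goalSeq
  | append_singleton τ j ih =>
    intro S r h
    have hτ : P.D.label τ ≠ none := P.D.prefix_closed τ [j] (by rw [h]; simp)
    obtain ⟨⟨S', r'⟩, hS'⟩ := Option.ne_none_iff_exists'.mp hτ
    rcases P.D.wf τ S' r' hS' with ⟨_, hnone⟩ | ⟨_, prems, hinf, hch⟩
    · exact absurd h (by rw [hnone j]; simp)
    · by_cases hj : j < prems.length
      · obtain ⟨r₁, hr₁⟩ := hch.1 ⟨j, hj⟩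
        rw [hr₁] at h
        injection h with h'
        injection h' with h1 h2
        rw [← h1]
        refine GInv_step hinf ?_ ?_ (ih S' r' hS') _ (List.get_mem prems _)
        · intro φ he
          subst he
          exact hcf ⟨τ, S', _, hS', φ, rfl⟩
        · intro v1 v2 t u he
          subst he
          exact hneql ⟨τ, S', _, hS', v1, v2, t, u, rfl⟩
      · exact absurd h (by rw [hch.2 j (by omega)]; simp)

lemma IS_step {S : Seq} {r : Rule} {prems : List Seq} (hinf : Inf r S prems)
    (hcut : ∀ φ, r ≠ Rule.cut φ) (heqL : ∀ v1 v2 t u, r ≠ Rule.eqL v1 v2 t u)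
    (hG : GInv S) (hIS : IndexSequent S) {j : ℕ} (hj : j < prems.length)
    (hsw : ∀ a b c x y z, r = Rule.caseAdd2 a b c x y z → j = 0 → IndexBot S b) :
    IndexSequent (prems.get ⟨j, hj⟩) := by
  cases hinf with
  | ax _ => simp at hj
  | weak hΓ hΔ =>
    cases j with
    | zero => exact IS_weak hΓ hΔ hIS
    | succ j' => simp at hj
  | cut => exact absurd rfl (hcut _)
  | subst =>
    cases j with
    | zero => exact IS_subst hIS
    | succ j' => simp at hj
  | negL => exact absurd (hG.1.1 _ (Finset.mem_insert_self _ _)) (by simp [shapeL])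
  | negR => exact absurd (hG.1.2 _ (Finset.mem_insert_self _ _)) (by simp [shapeR])
  | andL => exact absurd (hG.1.1 _ (Finset.mem_insert_self _ _)) (by simp [shapeL])
  | andR => exact absurd (hG.1.2 _ (Finset.mem_insert_self _ _)) (by simp [shapeR])
  | orL => exact absurd (hG.1.1 _ (Finset.mem_insert_self _ _)) (by simp [shapeL])
  | orR => exact absurd (hG.1.2 _ (Finset.mem_insert_self _ _)) (by simp [shapeR])
  | impL => exact absurd (hG.1.1 _ (Finset.mem_insert_self _ _)) (by simp [shapeL])
  | impR => exact absurd (hG.1.2 _ (Finset.mem_insert_self _ _)) (by simp [shapeR])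
  | allL => exact absurd (hG.1.1 _ (Finset.mem_insert_self _ _)) (by simp [shapeL])
  | allR _ => exact absurd (hG.1.2 _ (Finset.mem_insert_self _ _)) (by simp [shapeR])
  | exL _ => exact absurd (hG.1.1 _ (Finset.mem_insert_self _ _)) (by simp [shapeL])
  | exR => exact absurd (hG.1.2 _ (Finset.mem_insert_self _ _)) (by simp [shapeR])
  | eqR => exact absurd (hG.1.2 _ (Finset.mem_insert_self _ _)) (by simp [shapeR])
  | eqL => exact absurd rfl (heqL _ _ _ _)
  | eqLa =>
    cases j with
    | zero => exact IS_eqLa hIS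
    | succ j' => simp at hj
  | add1R1 => simp at hj
  | add1R2 =>
    cases j with
    | zero => exact IS_add1R2 hIS
    | succ j' => simp at hj
  | add2R1 => simp at hj
  | add2R2 => exact absurd (hG.1.2 _ (Finset.mem_insert_self _ _)) (by simp [shapeR])
  | caseAdd1 h1 h2 h3 h4 =>
    exact absurd (hG.1.1 _ (Finset.mem_insert_self _ _)) (by simp [shapeL])
  | caseAdd2 h1 h2 h3 h4 =>
    cases j with
    | zero =>
      have hIB := hsw _ _ _ _ _ _ rfl rfl
      exact IS_caseL h4 hG.2 hIS hIB
    | succ j' =>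
      cases j' with
      | zero => exact IS_caseR h1 h2 h3 h4 hIS
      | succ j'' => exact absurd hj (by simp)

lemma IVal_step_nonprog {S : Seq} {r : Rule} {prems : List Seq} (hinf : Inf r S prems)
    (hcut : ∀ φ, r ≠ Rule.cut φ) (heqL : ∀ v1 v2 t u, r ≠ Rule.eqL v1 v2 t u)
    (hG : GInv S) (hIS : IndexSequent S) {j : ℕ} (hj : j < prems.length)
    {τc τp : Fm} (hτc : τc ∈ S.ant) (hconn : connStep r j τc τp)
    {a₀ b₀ c₀ : Tm} (hτce : τc = Fm.add2 a₀ b₀ c₀)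
    (hτp_atom : isIndAtom τp)
    (hsw : ∀ a b c x y z, r = Rule.caseAdd2 a b c x y z → j = 0 → IndexBot S b)
    (hnp : ¬ progStep r j τc τp)
    {ι : ℤ} (hv : IVal (prems.get ⟨j, hj⟩) (snd2 τp) ι) : IVal S b₀ ι := by
  cases hinf with
  | ax _ => simp at hj
  | weak hΓ hΔ =>
    cases j with
    | zero =>
      have he : τp = τc := hconn
      rw [he, hτce] at hv
      exact IVal_weak hΓ hΔ hv
    | succ j' => simp at hj
  | cut => exact absurd rfl (hcut _)
  | subst =>
    cases j with
    | zero =>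
      have he : τc = Fm.subst _ τp := hconn
      rcases hτp_atom with ⟨ap, bp, cp, hpe⟩ | ⟨ap, bp, cp, hpe⟩
      · rw [hpe] at he
        rw [hτce] at he
        exact absurd he (by simp [Fm.subst])
      · rw [hpe] at he
        rw [hτce] at he
        simp only [Fm.subst, Fm.add2.injEq] at he
        rw [he.2.1]
        rw [hpe] at hv
        exact IVal_subst hv
    | succ j' => simp at hj
  | negL => exact absurd (hG.1.1 _ (Finset.mem_insert_self _ _)) (by simp [shapeL])
  | negR => exact absurd (hG.1.2 _ (Finset.mem_insert_self _ _)) (by simp [shapeR])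
  | andL => exact absurd (hG.1.1 _ (Finset.mem_insert_self _ _)) (by simp [shapeL])
  | andR => exact absurd (hG.1.2 _ (Finset.mem_insert_self _ _)) (by simp [shapeR])
  | orL => exact absurd (hG.1.1 _ (Finset.mem_insert_self _ _)) (by simp [shapeL])
  | orR => exact absurd (hG.1.2 _ (Finset.mem_insert_self _ _)) (by simp [shapeR])
  | impL => exact absurd (hG.1.1 _ (Finset.mem_insert_self _ _)) (by simp [shapeL])
  | impR => exact absurd (hG.1.2 _ (Finset.mem_insert_self _ _)) (by simp [shapeR])
  | allL => exact absurd (hG.1.1 _ (Finset.mem_insert_self _ _)) (by simp [shapeL])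
  | allR _ => exact absurd (hG.1.2 _ (Finset.mem_insert_self _ _)) (by simp [shapeR])
  | exL _ => exact absurd (hG.1.1 _ (Finset.mem_insert_self _ _)) (by simp [shapeL])
  | exR => exact absurd (hG.1.2 _ (Finset.mem_insert_self _ _)) (by simp [shapeR])
  | eqR => exact absurd (hG.1.2 _ (Finset.mem_insert_self _ _)) (by simp [shapeR])
  | eqL => exact absurd rfl (heqL _ _ _ _)
  | eqLa =>
    cases j with
    | zero =>
      obtain ⟨F, hc, hp⟩ := hconn
      rw [hτce] at hc
      obtain ⟨Fa, Fb, Fc, hFe, ha', hb', hc'⟩ := subst_eq_add2 hc.symm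
      rw [hb']
      rw [hp, hFe] at hv
      exact IVal_eqLa hv
    | succ j' => simp at hj
  | add1R1 => simp at hj
  | add1R2 =>
    cases j with
    | zero =>
      have he : τp = τc := hconn
      rw [he, hτce] at hv
      exact IVal_add1R2 hv
    | succ j' => simp at hj
  | add2R1 => simp at hj
  | add2R2 => exact absurd (hG.1.2 _ (Finset.mem_insert_self _ _)) (by simp [shapeR])
  | caseAdd1 h1 h2 h3 h4 =>
    exact absurd (hG.1.1 _ (Finset.mem_insert_self _ _)) (by simp [shapeL])
  | caseAdd2 h1 h2 h3 h4 =>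
    rename_i Γ1 Δ1 a1 b1 c1 x1 y1 z1
    have he : τp = τc := by
      rcases hconn with he | hps
      · exact he
      · exact absurd hps hnp
    have hfrτ : x1 ∉ τc.fv ∧ y1 ∉ τc.fv ∧ z1 ∉ τc.fv := by
      rcases Finset.mem_insert.mp hτc with he' | hΓm
      · exact he' ▸ h4 _ (Finset.mem_insert_self _ _)
      · exact h4 _ (Finset.mem_insert_of_mem (Finset.mem_union_left _ hΓm))
    rw [hτce] at hfrτ
    cases j with
    | zero =>
      have hIB := hsw _ _ _ _ _ _ rfl rfl
      rw [he, hτce] at hv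
      refine IVal_caseL_nonprog h4 hG.2 hIS hIB
        (notfv3_2 fv_add2' hfrτ.2.1) ?_ hv
      exact mem_BCset_add2b (hτce ▸ hτc)
    | succ j' =>
      cases j' with
      | zero =>
        rw [he, hτce] at hv
        exact IVal_caseR_nonprog h1 h2 h3 h4 (notfv3_2 fv_add2' hfrτ.1)
          (notfv3_2 fv_add2' hfrτ.2.1) (notfv3_2 fv_add2' hfrτ.2.2) hv
      | succ j'' => exact absurd hj (by simp)

lemma IVal_step_prog {S : Seq} {r : Rule} {prems : List Seq} (hinf : Inf r S prems)
    (hG : GInv S) {j : ℕ} (hj : j < prems.length)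
    {τc τp : Fm} (hτc : τc ∈ S.ant)
    {a₀ b₀ c₀ : Tm} (hτce : τc = Fm.add2 a₀ b₀ c₀)
    (hp : progStep r j τc τp)
    {ι : ℤ} (hv : IVal (prems.get ⟨j, hj⟩) (snd2 τp) ι) : IVal S b₀ (ι - 1) := by
  cases hinf with
  | caseAdd1 h1 h2 h3 h4 =>
    exact absurd (hG.1.1 _ (Finset.mem_insert_self _ _)) (by simp [shapeL])
  | caseAdd2 h1 h2 h3 h4 =>
    obtain ⟨hpc, hpj, hpp⟩ := hp
    rw [hτce] at hpc
    injection hpc with e1 e2 e3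
    subst hpj
    rw [hpp] at hv
    rw [e2]
    exact IVal_caseR_prog h1 h2 h3 h4 hv
  | ax _ => exact hp.elim
  | weak _ _ => exact hp.elim
  | cut => exact hp.elim
  | subst => exact hp.elim
  | negL => exact hp.elim
  | negR => exact hp.elim
  | andL => exact hp.elim
  | andR => exact hp.elim
  | orL => exact hp.elim
  | orR => exact hp.elim
  | impL => exact hp.elim
  | impR => exact hp.elim
  | allL => exact hp.elim
  | allR _ => exact hp.elim
  | exL _ => exact hp.elim
  | exR => exact hp.elim
  | eqR => exact hp.elim
  | eqL => exact hp.elim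
  | eqLa => exact hp.elim
  | add1R1 => exact hp.elim
  | add1R2 => exact hp.elim
  | add2R1 => exact hp.elim
  | add2R2 => exact hp.elim

/-- On every infinite index path of the tree-unfolding of a
    cut-free cycle-normal `CLKID^ω_a` proof of `Add2(x,y,z) ⊢ Add1(x,y,z)` there
    is a switching point followed by the right assumption of its (Case Add2). -/
theorem switching_point_on_infinite_index_path (P : PreProof) (hP : IsCNProofOfGoal P)
    (T : Lbl) (hT : IsUnfolding P T)
    (p : ℕ → List ℕ) (hp : IsInfIndexPath T p) :
    ∃ l : ℕ, SwitchingPoint T (p l) ∧ p (l + 1) = p l ++ [1] := by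
  classical
  by_contra hcon
  push_neg at hcon
  have hcn := hP.2.2.2.1
  have hcf := hP.2.1
  have hneql := hP.2.2.1
  obtain ⟨T', hT', hgtc'⟩ := hP.1
  have hgtc : GTC T := GTC_of_unfolding hcn hT hT' hgtc'
  obtain ⟨k, τ, htr, hprog⟩ := hgtc p hp.1
  have hne : ∀ i, T (p i) ≠ none := hp.1.1
  have hFex : ∀ i, ∃ v, T (p i) = some v := fun i => Option.ne_none_iff_exists'.mp (hne i)
  choose F hF using hFex
  have hJex : ∀ i, ∃ n, p (i + 1) = p i ++ [n] := hp.1.2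
  choose J hJ using hJex
  have hJeq : ∀ i j, p (i + 1) = p i ++ [j] → J i = j := by
    intro i j hj'
    have h1 : p i ++ [J i] = p i ++ [j] := (hJ i).symm.trans hj'
    have h2 := List.append_cancel_left h1
    simpa using h2
  have hGInv : ∀ i, GInv (F i).1 := by
    intro i
    have hres := T_eq_res hcn hT (p i)
    rw [hF i] at hres
    exact D_GInv hP (resP P (p i)) (F i).1 (F i).2 hres.symm
  have hcutR : ∀ i, ∀ φ, (F i).2 ≠ Rule.cut φ := by
    intro i φ he
    have hres := T_eq_res hcn hT (p i)
    rw [hF i] at hres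
    exact hcf ⟨resP P (p i), (F i).1, (F i).2, hres.symm, φ, he⟩
  have heqLR : ∀ i, ∀ v1 v2 t u, (F i).2 ≠ Rule.eqL v1 v2 t u := by
    intro i v1 v2 t u he
    have hres := T_eq_res hcn hT (p i)
    rw [hF i] at hres
    exact hneql ⟨resP P (p i), (F i).1, (F i).2, hres.symm, v1, v2, t, u, he⟩
  have hstepAll : ∀ i, ∃ (prems : List Seq) (_ : Inf (F i).2 (F i).1 prems)
      (hj : J i < prems.length), (F (i + 1)).1 = prems.get ⟨J i, hj⟩ := by
    intro i
    obtain ⟨hrne, prems, hinf, hch1, hch2⟩ := T_node hcn hT (hF i)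
    by_cases hj : J i < prems.length
    · obtain ⟨r', hr'⟩ := hch1 (J i) hj
      rw [← hJ i] at hr'
      rw [hF (i + 1)] at hr'
      injection hr' with hr''
      exact ⟨prems, hinf, hj, congrArg Prod.fst hr''⟩
    · exfalso
      have hnone := hch2 (J i) (by omega)
      rw [← hJ i] at hnone
      exact hne (i + 1) hnone
  have hswR : ∀ i, ∀ a b c x y z, (F i).2 = Rule.caseAdd2 a b c x y z → J i = 0 →
      IndexBot (F i).1 b := by
    intro i a b c x y z hr hj0
    have hca : CaseAdd2At T (p i) := ⟨(F i).1, a, b, c, x, y, z, by rw [hF i, ← hr]⟩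
    have hsw := hp.2.2 i hca (by rw [hJ i, hj0])
    obtain ⟨S₂, a₂, b₂, c₂, x₂, y₂, z₂, hS₂, hIB⟩ := hsw
    rw [hF i] at hS₂
    injection hS₂ with hS₂'
    have h1 : (F i).1 = S₂ := by rw [hS₂']
    have h2 : (F i).2 = Rule.caseAdd2 a₂ b₂ c₂ x₂ y₂ z₂ := by rw [hS₂']
    rw [hr] at h2
    injection h2 with e1 e2 e3 e4 e5 e6
    rw [h1, e2]
    exact hIB
  have hIS : ∀ i, IndexSequent (F i).1 := by
    intro i
    induction i with
    | zero =>
      obtain ⟨S, r, hS, hiseq⟩ := hp.2.1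
      rw [hF 0] at hS
      injection hS with hS'
      rw [show (F 0).1 = S from by rw [hS']]
      exact hiseq
    | succ i ih =>
      obtain ⟨prems, hinf, hj, hFs⟩ := hstepAll i
      rw [hFs]
      exact IS_step hinf (hcutR i) (heqLR i) (hGInv i) ih hj (hswR i)
  have htr' : ∀ i, k ≤ i → τ i ∈ (F i).1.ant ∧ isIndAtom (τ i) ∧
      connStep (F i).2 (J i) (τ i) (τ (i + 1)) := by
    intro i hk
    obtain ⟨S, r, j, hTi, hmem, hatom, hstep, hconn⟩ := htr i hk
    rw [hF i] at hTi
    injection hTi with hTi'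
    have h1 : (F i).1 = S := by rw [hTi']
    have h2 : (F i).2 = r := by rw [hTi']
    have hj2 : J i = j := hJeq i j hstep
    rw [h1, h2, hj2]
    exact ⟨hmem, hatom, hconn⟩
  have hτ2 : ∀ i, k ≤ i → ∃ a b c, τ i = Fm.add2 a b c := by
    intro i hk
    rcases (htr' i hk).2.1 with ⟨a, b, c, he⟩ | h2
    · exfalso
      have := (hGInv i).1.1 (τ i) (htr' i hk).1
      rw [he] at this
      rcases this with ⟨t, u, hh⟩ | ⟨a', b', c', hh⟩ <;> simp at hh
    · exact h2
  have hSTEPp : ∀ i, k ≤ i → progAt T p τ i → ∀ ι : ℤ,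
      IVal (F (i + 1)).1 (snd2 (τ (i + 1))) ι →
      IVal (F i).1 (snd2 (τ i)) (ι - 1) := by
    intro i hk hpa ι hv
    obtain ⟨prems, hinf, hj, hFs⟩ := hstepAll i
    obtain ⟨a₀, b₀, c₀, hτe⟩ := hτ2 i hk
    obtain ⟨S, r, j, hTi, hstep, hps⟩ := hpa
    rw [hF i] at hTi
    injection hTi with hTi'
    have h2 : (F i).2 = r := by rw [hTi']
    have hj2 : J i = j := hJeq i j hstep
    rw [hFs] at hv
    have hres := IVal_step_prog hinf (hGInv i) hj (htr' i hk).1 hτe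
      (by rw [h2, hj2]; exact hps) hv
    rw [hτe]
    exact hres
  have hSTEPn : ∀ i, k ≤ i → ¬ progAt T p τ i → ∀ ι : ℤ,
      IVal (F (i + 1)).1 (snd2 (τ (i + 1))) ι →
      IVal (F i).1 (snd2 (τ i)) ι := by
    intro i hk hnpa ι hv
    obtain ⟨prems, hinf, hj, hFs⟩ := hstepAll i
    obtain ⟨a₀, b₀, c₀, hτe⟩ := hτ2 i hk
    rw [hFs] at hv
    have hnp : ¬ progStep (F i).2 (J i) (τ i) (τ (i + 1)) := by
      intro hps
      exact hnpa ⟨(F i).1, (F i).2, J i, hF i, hJ i, hps⟩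
    have hres := IVal_step_nonprog hinf (hcutR i) (heqLR i) (hGInv i) (hIS i) hj
      (htr' i hk).1 (htr' i hk).2.2 hτe (htr' (i + 1) (by omega)).2.1 (hswR i) hnp hv
    rw [hτe]
    exact hres
  have hTR : ∀ d i, k ≤ i → ∀ ι : ℤ, IVal (F (i + d)).1 (snd2 (τ (i + d))) ι →
      IVal (F i).1 (snd2 (τ i))
        (ι - (((Finset.Ico i (i + d)).filter (fun n => progAt T p τ n)).card : ℤ)) := by
    intro d
    induction d with
    | zero =>
      intro i hk ι hv
      simpa using hv
    | succ d ih =>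
      intro i hk ι hv
      have hv' : IVal (F (i + d + 1)).1 (snd2 (τ (i + d + 1))) ι := hv
      have hins : Finset.Ico i (i + (d + 1)) = insert (i + d) (Finset.Ico i (i + d)) := by
        rw [show i + (d + 1) = (i + d) + 1 from rfl]
        exact Nat.Ico_succ_right_eq_insert_Ico (by omega)
      by_cases hpa : progAt T p τ (i + d)
      · have h1 := hSTEPp (i + d) (by omega) hpa ι hv'
        have h2 := ih i hk _ h1
        rw [hins, Finset.filter_insert, if_pos hpa,
          Finset.card_insert_of_notMem (by simp)]
        have hcast : (ι - (((((Finset.Ico i (i + d)).filter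
            (fun n => progAt T p τ n)).card) + 1 : ℕ) : ℤ)) =
            (ι - 1) - ((((Finset.Ico i (i + d)).filter
              (fun n => progAt T p τ n)).card : ℕ) : ℤ) := by
          push_cast
          ring
        rw [hcast]
        exact h2
      · have h1 := hSTEPn (i + d) (by omega) hpa ι hv'
        have h2 := ih i hk _ h1
        rw [hins, Finset.filter_insert, if_neg hpa]
        exact h2
  choose W hW using hprog
  set f : ℕ → ℕ := fun n => Nat.rec (W k) (fun _ prev => W (prev + 1)) n with hfdef
  have hfprop : ∀ n, k ≤ f n ∧ progAt T p τ (f n) := by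
    intro n
    cases n with
    | zero => exact ⟨(hW k).2.1, (hW k).2.2⟩
    | succ n => exact ⟨(hW (f n + 1)).2.1, (hW (f n + 1)).2.2⟩
  have hfmono : StrictMono f := by
    apply strictMono_nat_of_lt_succ
    intro n
    exact lt_of_lt_of_le (Nat.lt_succ_self _) (hW (f n + 1)).1
  have hpr : ∀ i, k ≤ i → progAt T p τ i → ∃ a b c x y z,
      (F i).2 = Rule.caseAdd2 a b c x y z ∧ τ i = Fm.add2 a b c ∧ J i = 1 := by
    intro i hk hpa
    obtain ⟨a₀, b₀, c₀, hτe⟩ := hτ2 i hk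
    obtain ⟨S, r, j, hTi, hstep, hps⟩ := hpa
    rw [hF i] at hTi
    injection hTi with hTi'
    have h2 : (F i).2 = r := by rw [hTi']
    have hj2 : J i = j := hJeq i j hstep
    revert hps
    cases r
    case caseAdd2 a b c x y z =>
      exact fun hps => ⟨a, b, c, x, y, z, h2, hps.1, by rw [hj2, hps.2.1]⟩
    case caseAdd1 a b c x y z =>
      intro hps
      have := hτe.symm.trans hps.1
      simp at this
    all_goals exact fun hps => hps.elim
  have hnonbot : ∀ i, k ≤ i → progAt T p τ i → ∃ ι : ℤ, IVal (F i).1 (snd2 (τ i)) ι := by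
    intro i hk hpa
    obtain ⟨a, b, c, x, y, z, hr, hτe, hj1⟩ := hpr i hk hpa
    have hstep1 : p (i + 1) = p i ++ [1] := by rw [hJ i, hj1]
    have hnsw : ¬ SwitchingPoint T (p i) := fun hswp => hcon i hswp hstep1
    have hnib : ¬ IndexBot (F i).1 b := by
      intro hib
      exact hnsw ⟨(F i).1, a, b, c, x, y, z, by rw [hF i, ← hr], hib⟩
    unfold IndexBot at hnib
    push_neg at hnib
    obtain ⟨a', b', c', hmem, hdep⟩ := hnib
    obtain ⟨n, m, he⟩ := hdep
    refine ⟨(m : ℤ) - (n : ℤ), a', b', c', hmem, n, m, ?_, rfl⟩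
    rw [hτe]
    exact he
  have hdom : ∀ n, resP P (p (f n)) ∈ {σ | P.D.label σ ≠ none} := by
    intro n
    have hres := T_eq_res hcn hT (p (f n))
    rw [hF _] at hres
    simp only [Set.mem_setOf_eq, ← hres]
    simp
  haveI := P.fin.to_subtype
  obtain ⟨n1, n2, hne12, heqnode⟩ := Finite.exists_ne_map_eq_of_infinite
    (fun n : ℕ => (⟨resP P (p (f n)), hdom n⟩ : {σ // σ ∈ {σ | P.D.label σ ≠ none}}))
  have hFeqOf : ∀ n n', resP P (p (f n)) = resP P (p (f n')) → F (f n) = F (f n') := by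
    intro n n' e
    have h1 := T_eq_res hcn hT (p (f n))
    have h2 := T_eq_res hcn hT (p (f n'))
    rw [hF _] at h1 h2
    rw [e, ← h2] at h1
    injection h1
  have key : ∀ n1 n2, n1 < n2 → F (f n1) = F (f n2) → False := by
    intro m1 m2 hlt hFeq
    have hlt' : f m1 < f m2 := hfmono hlt
    obtain ⟨a, b, c, x, y, z, hr1, hτe1, hj1⟩ := hpr (f m1) (hfprop m1).1 (hfprop m1).2
    obtain ⟨a2, b2, c2, x2, y2, z2, hr2, hτe2, hj2⟩ := hpr (f m2) (hfprop m2).1 (hfprop m2).2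
    rw [← hFeq] at hr2
    have hrr := hr1.symm.trans hr2
    injection hrr with e1 e2 e3 e4 e5 e6
    obtain ⟨ν, hν⟩ := hnonbot (f m2) (hfprop m2).1 (hfprop m2).2
    have hh2 : IVal (F (f m2)).1 b2 ν := by
      rw [hτe2] at hν
      exact hν
    have hνb : IVal (F (f m2)).1 b ν := by
      rw [e2]
      exact hh2
    have hd : f m1 + (f m2 - f m1) = f m2 := by omega
    have htrns := hTR (f m2 - f m1) (f m1) (hfprop m1).1 ν (by
      rw [hd, hτe2]
      exact hh2)
    have hν1 : IVal (F (f m1)).1 (snd2 (τ (f m1))) ν := by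
      rw [hFeq, hτe1]
      exact hνb
    have huniq := IVal_unique (hIS (f m1)).2 htrns hν1
    have hmemf : f m1 ∈ (Finset.Ico (f m1) (f m1 + (f m2 - f m1))).filter
        (fun n => progAt T p τ n) := by
      rw [Finset.mem_filter, Finset.mem_Ico]
      exact ⟨⟨le_refl _, by omega⟩, (hfprop m1).2⟩
    have hcne := Finset.card_ne_zero_of_mem hmemf
    omega
  rcases Ne.lt_or_gt hne12 with h | h
  · exact key n1 n2 h (hFeqOf n1 n2 (congrArg Subtype.val heqnode))
  · exact key n2 n1 h (hFeqOf n2 n1 (congrArg Subtype.val heqnode.symm))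

end CLKID
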